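/- arXiv:1911.04216 — 2 statements merged into one kernel-verified Lean document; each statement's English description precedes it below -/
import Mathlib

section
/- If R is a strongly G-graded k-algebra with A = R_1, then the induction functor R ⊗_A − : A-Mod → R-Gr is an equivalence of categories, with quasi-inverse the functor sending a graded module M to its identity component M_1. -/
set_option linter.unusedVariables false
set_option linter.unusedSectionVars false
set_option synthInstance.maxHeartbeats 1000000
set_option maxHeartbeats 1000000
/-! ### Library: basics on group-graded algebras.
The group `G` is written additively (an additive group is the same thing as a group);
the identity component is `ℛ 0`. -/

section GradedLib

variable {k R G : Type*} [CommRing k] [Ring R] [Algebra k R] [AddGroup G]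
variable (ℛ : G → Submodule k R) [SetLike.GradedMonoid ℛ]

/-- `R` is *strongly graded* if `ℛ g * ℛ h = ℛ (g + h)` for all `g h`. -/
def IsStronglyGraded : Prop := ∀ g h : G, ℛ g * ℛ h = ℛ (g + h)

namespace GrComp

variable {ℛ}

lemma mul_mem_shift {g h : G} {x y : R} (hx : x ∈ ℛ g) (hy : y ∈ ℛ h) :
    x * y ∈ ℛ (g + h) := SetLike.GradedMul.mul_mem hx hy

variable (ℛ)

/-- Left action of the identity component on each component, by multiplication. -/
instance instSMul (g : G) : SMul ↥(ℛ 0) ↥(ℛ g) :=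
  ⟨fun a x => ⟨(a : R) * (x : R), by
    have := mul_mem_shift a.2 x.2; rwa [zero_add] at this⟩⟩

@[simp] lemma coe_smul (g : G) (a : ↥(ℛ 0)) (x : ↥(ℛ g)) :
    ((a • x : ↥(ℛ g)) : R) = (a : R) * (x : R) := rfl

/-- Each component is a left module over the identity component. -/
instance instModule (g : G) : Module ↥(ℛ 0) ↥(ℛ g) where
  one_smul x := Subtype.ext (one_mul (x : R))
  mul_smul a b x := Subtype.ext (mul_assoc (a : R) (b : R) (x : R))
  smul_zero a := Subtype.ext (mul_zero (a : R))
  smul_add a x y := Subtype.ext (mul_add (a : R) (x : R) (y : R))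
  add_smul a b x := Subtype.ext (add_mul (a : R) (b : R) (x : R))
  zero_smul x := Subtype.ext (zero_mul (x : R))

/-- Right action of the identity component on each component, by multiplication. -/
instance instSMulOp (g : G) : SMul (↥(ℛ 0))ᵐᵒᵖ ↥(ℛ g) :=
  ⟨fun a x => ⟨(x : R) * (a.unop : R), by
    have := mul_mem_shift x.2 a.unop.2; rwa [add_zero] at this⟩⟩

@[simp] lemma coe_smul_op (g : G) (a : (↥(ℛ 0))ᵐᵒᵖ) (x : ↥(ℛ g)) :
    ((a • x : ↥(ℛ g)) : R) = (x : R) * (a.unop : R) := rfl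

/-- Each component is a right module over the identity component. -/
instance instModuleOp (g : G) : Module (↥(ℛ 0))ᵐᵒᵖ ↥(ℛ g) where
  one_smul x := Subtype.ext (mul_one (x : R))
  mul_smul a b x := Subtype.ext (mul_assoc (x : R) (b.unop : R) (a.unop : R)).symm
  smul_zero a := Subtype.ext (zero_mul _)
  smul_add a x y := Subtype.ext (add_mul (x : R) (y : R) (a.unop : R))
  add_smul a b x := Subtype.ext (mul_add (x : R) (a.unop : R) (b.unop : R))
  zero_smul x := Subtype.ext (mul_zero (x : R))

/-- The two actions commute: components are bimodules. -/
instance instSMulCommClass (g : G) :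
    SMulCommClass ↥(ℛ 0) (↥(ℛ 0))ᵐᵒᵖ ↥(ℛ g) :=
  ⟨fun a b x => Subtype.ext (mul_assoc (a : R) (x : R) (b.unop : R)).symm⟩

end GrComp

end GradedLib

section RAsBimodule

variable {k R G : Type*} [CommRing k] [Ring R] [Algebra k R] [AddGroup G]
variable (ℛ : G → Submodule k R) [SetLike.GradedMonoid ℛ]

/-- The identity component acts on `R` on the left, by multiplication. -/
instance GrComp.instModuleSelfLeft : Module ↥(ℛ 0) R where
  smul a r := (a : R) * r
  one_smul r := one_mul r
  mul_smul a b r := mul_assoc (a : R) (b : R) r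
  smul_zero a := mul_zero (a : R)
  smul_add a r s := mul_add (a : R) r s
  add_smul a b r := add_mul (a : R) (b : R) r
  zero_smul r := zero_mul r

@[simp] lemma GrComp.smul_self_left_def (a : ↥(ℛ 0)) (r : R) :
    a • r = (a : R) * r := rfl

/-- The identity component acts on `R` on the right, by multiplication. -/
instance GrComp.instModuleSelfRight : Module (↥(ℛ 0))ᵐᵒᵖ R where
  smul a r := r * (a.unop : R)
  one_smul r := mul_one r
  mul_smul a b r := (mul_assoc r (b.unop : R) (a.unop : R)).symm
  smul_zero a := zero_mul _
  smul_add a r s := add_mul r s (a.unop : R)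
  add_smul a b r := mul_add r (a.unop : R) (b.unop : R)
  zero_smul r := mul_zero r

@[simp] lemma GrComp.smul_self_right_def (a : (↥(ℛ 0))ᵐᵒᵖ) (r : R) :
    a • r = r * (a.unop : R) := rfl

instance GrComp.instSMulCommClassSelf :
    SMulCommClass R (↥(ℛ 0))ᵐᵒᵖ R :=
  ⟨fun r a x => (mul_assoc r x (a.unop : R)).symm⟩

instance GrComp.instSMulCommClassSelf' :
    SMulCommClass ↥(ℛ 0) (↥(ℛ 0))ᵐᵒᵖ R :=
  ⟨fun a b x => (mul_assoc (a : R) x (b.unop : R)).symm⟩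

end RAsBimodule
/-! ### Library: tensor product `M ⊗[A] N` over a possibly noncommutative ring `A`,
for a right `A`-module `M` and a left `A`-module `N`, realized as a quotient of `M ⊗[ℤ] N`. -/

noncomputable section NCTensorLib

open TensorProduct MulOpposite

/-- The subgroup of relations defining the balanced tensor product. -/
def NCT.rels (A : Type*) [Ring A] (M N : Type*) [AddCommGroup M] [AddCommGroup N]
    [Module Aᵐᵒᵖ M] [Module A N] : AddSubgroup (M ⊗[ℤ] N) :=
  AddSubgroup.closure
    {z | ∃ (a : A) (m : M) (n : N), z = (op a • m) ⊗ₜ[ℤ] n - m ⊗ₜ[ℤ] (a • n)}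

/-- The tensor product over `A` of a right `A`-module and a left `A`-module. -/
def NCT (A : Type*) [Ring A] (M N : Type*) [AddCommGroup M] [AddCommGroup N]
    [Module Aᵐᵒᵖ M] [Module A N] : Type _ :=
  (M ⊗[ℤ] N) ⧸ NCT.rels A M N

namespace NCT

variable {A : Type*} [Ring A] {M N : Type*} [AddCommGroup M] [AddCommGroup N]
  [Module Aᵐᵒᵖ M] [Module A N]

instance : AddCommGroup (NCT A M N) :=
  QuotientAddGroup.Quotient.addCommGroup _

/-- The canonical generator `m ⊗ n` of `NCT A M N`. -/
def mk (A : Type*) [Ring A] {M N : Type*} [AddCommGroup M] [AddCommGroup N]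
    [Module Aᵐᵒᵖ M] [Module A N] (m : M) (n : N) : NCT A M N :=
  QuotientAddGroup.mk (m ⊗ₜ[ℤ] n)

lemma mk_balanced (a : A) (m : M) (n : N) :
    mk A (op a • m) n = mk A m (a • n) := by
  refine QuotientAddGroup.eq.2 ?_
  have : -((op a • m) ⊗ₜ[ℤ] n) + m ⊗ₜ[ℤ] (a • n)
      = -((op a • m) ⊗ₜ[ℤ] n - m ⊗ₜ[ℤ] (a • n)) := by abel
  rw [this]
  exact neg_mem (AddSubgroup.subset_closure ⟨a, m, n, rfl⟩)

lemma mk_add_left (m m' : M) (n : N) :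
    mk A (m + m') n = mk A m n + mk A m' n := by
  show QuotientAddGroup.mk _ = _
  rw [add_tmul]; rfl

lemma mk_add_right (m : M) (n n' : N) :
    mk A m (n + n') = mk A m n + mk A m n' := by
  show QuotientAddGroup.mk _ = _
  rw [tmul_add]; rfl

section LeftModule

variable {C : Type*} [Ring C] [Module C M] [SMulCommClass C Aᵐᵒᵖ M]

/-- Auxiliary endomorphism of `M ⊗[ℤ] N` induced by the action of `c : C` on `M`. -/
def lAux (N : Type*) [AddCommGroup N] (c : C) : (M ⊗[ℤ] N) →ₗ[ℤ] (M ⊗[ℤ] N) :=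
  TensorProduct.map (DistribMulAction.toAddMonoidHom M c).toIntLinearMap LinearMap.id

lemma lAux_tmul (c : C) (m : M) (n : N) :
    lAux N c (m ⊗ₜ[ℤ] n) = (c • m) ⊗ₜ[ℤ] n := rfl

lemma rels_le_comap_lAux (A : Type*) [Ring A] [Module Aᵐᵒᵖ M] [Module A N]
    [SMulCommClass C Aᵐᵒᵖ M] (c : C) :
    NCT.rels A M N ≤ (NCT.rels A M N).comap (lAux N c).toAddMonoidHom := by
  refine (AddSubgroup.closure_le _).2 ?_
  rintro z ⟨a, m, n, rfl⟩
  refine AddSubgroup.mem_comap.2 ?_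
  have h : lAux N c ((op a • m) ⊗ₜ[ℤ] n - m ⊗ₜ[ℤ] (a • n))
      = (op a • (c • m)) ⊗ₜ[ℤ] n - (c • m) ⊗ₜ[ℤ] (a • n) := by
    rw [map_sub, lAux_tmul, lAux_tmul, smul_comm]
  rw [LinearMap.toAddMonoidHom_coe, h]
  exact AddSubgroup.subset_closure ⟨a, c • m, n, rfl⟩

/-- The action of `c : C` on the balanced tensor product, via the left factor. -/
def lsmul (c : C) : NCT A M N →+ NCT A M N :=
  QuotientAddGroup.map _ _ (lAux N c).toAddMonoidHom (rels_le_comap_lAux A c)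

lemma lsmul_mk (c : C) (m : M) (n : N) :
    lsmul c (mk A m n) = mk A (c • m) n := by
  show QuotientAddGroup.mk _ = _
  rfl

instance instModuleLeft : Module C (NCT A M N) where
  smul c x := lsmul c x
  one_smul x := by
    refine QuotientAddGroup.induction_on x (fun z => ?_)
    show QuotientAddGroup.mk (lAux N (1 : C) z) = QuotientAddGroup.mk z
    congr 1
    have h1 : lAux (M := M) N (1 : C) = LinearMap.id := by
      apply TensorProduct.ext'
      intro m n
      show ((1 : C) • m) ⊗ₜ[ℤ] n = m ⊗ₜ[ℤ] n
      rw [one_smul]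
    rw [h1]; rfl
  mul_smul c d x := by
    refine QuotientAddGroup.induction_on x (fun z => ?_)
    show QuotientAddGroup.mk (lAux N (c * d) z)
      = QuotientAddGroup.mk (lAux N c (lAux N d z))
    congr 1
    have h1 : lAux (M := M) N (c * d) = (lAux N c).comp (lAux N d) := by
      apply TensorProduct.ext'
      intro m n
      show ((c * d) • m) ⊗ₜ[ℤ] n = (c • (d • m)) ⊗ₜ[ℤ] n
      rw [mul_smul]
    rw [h1]; rfl
  smul_zero c := map_zero (lsmul (A := A) (M := M) (N := N) c)
  smul_add c x y := map_add (lsmul (A := A) (M := M) (N := N) c) x y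
  add_smul c d x := by
    refine QuotientAddGroup.induction_on x (fun z => ?_)
    show QuotientAddGroup.mk (lAux N (c + d) z)
      = QuotientAddGroup.mk (lAux N c z) + QuotientAddGroup.mk (lAux N d z)
    have h1 : lAux (M := M) N (c + d) = lAux N c + lAux N d := by
      apply TensorProduct.ext'
      intro m n
      show ((c + d) • m) ⊗ₜ[ℤ] n = (c • m) ⊗ₜ[ℤ] n + (d • m) ⊗ₜ[ℤ] n
      rw [add_smul, add_tmul]
    rw [h1]; rfl
  zero_smul x := by
    refine QuotientAddGroup.induction_on x (fun z => ?_)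
    show QuotientAddGroup.mk (lAux N (0 : C) z) = 0
    have h1 : lAux (M := M) N (0 : C) = 0 := by
      apply TensorProduct.ext'
      intro m n
      show ((0 : C) • m) ⊗ₜ[ℤ] n = 0
      rw [zero_smul, zero_tmul]
    rw [h1]; rfl

lemma smul_mk (c : C) (m : M) (n : N) :
    c • mk A m n = mk A (c • m) n := lsmul_mk c m n

end LeftModule

section RightModule

variable {C : Type*} [Ring C] [Module C N] [SMulCommClass A C N]

/-- Auxiliary endomorphism of `M ⊗[ℤ] N` induced by the action of `c : C` on `N`. -/
def rAux (M : Type*) [AddCommGroup M] (c : C) : (M ⊗[ℤ] N) →ₗ[ℤ] (M ⊗[ℤ] N) :=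
  TensorProduct.map LinearMap.id (DistribMulAction.toAddMonoidHom N c).toIntLinearMap

lemma rAux_tmul (c : C) (m : M) (n : N) :
    rAux M c (m ⊗ₜ[ℤ] n) = m ⊗ₜ[ℤ] (c • n) := rfl

lemma rels_le_comap_rAux (c : C) :
    NCT.rels A M N ≤ (NCT.rels A M N).comap (rAux M c).toAddMonoidHom := by
  refine (AddSubgroup.closure_le _).2 ?_
  rintro z ⟨a, m, n, rfl⟩
  refine AddSubgroup.mem_comap.2 ?_
  have h : rAux M c ((op a • m) ⊗ₜ[ℤ] n - m ⊗ₜ[ℤ] (a • n))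
      = (op a • m) ⊗ₜ[ℤ] (c • n) - m ⊗ₜ[ℤ] (a • (c • n)) := by
    rw [map_sub, rAux_tmul, rAux_tmul, ← smul_comm a c n]
  rw [LinearMap.toAddMonoidHom_coe, h]
  exact AddSubgroup.subset_closure ⟨a, m, c • n, rfl⟩

/-- The action of `c : C` on the balanced tensor product, via the right factor. -/
def rsmul (c : C) : NCT A M N →+ NCT A M N :=
  QuotientAddGroup.map _ _ (rAux M c).toAddMonoidHom (rels_le_comap_rAux c)

lemma rsmul_mk (c : C) (m : M) (n : N) :
    rsmul c (mk A m n) = mk A m (c • n) := by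
  show QuotientAddGroup.mk _ = _
  rfl

instance instModuleRight : Module C (NCT A M N) where
  smul c x := rsmul c x
  one_smul x := by
    refine QuotientAddGroup.induction_on x (fun z => ?_)
    show QuotientAddGroup.mk (rAux M (1 : C) z) = QuotientAddGroup.mk z
    congr 1
    have h1 : rAux (N := N) M (1 : C) = LinearMap.id := by
      apply TensorProduct.ext'
      intro m n
      show m ⊗ₜ[ℤ] ((1 : C) • n) = m ⊗ₜ[ℤ] n
      rw [one_smul]
    rw [h1]; rfl
  mul_smul c d x := by
    refine QuotientAddGroup.induction_on x (fun z => ?_)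
    show QuotientAddGroup.mk (rAux M (c * d) z)
      = QuotientAddGroup.mk (rAux M c (rAux M d z))
    congr 1
    have h1 : rAux (N := N) M (c * d) = (rAux M c).comp (rAux M d) := by
      apply TensorProduct.ext'
      intro m n
      show m ⊗ₜ[ℤ] ((c * d) • n) = m ⊗ₜ[ℤ] (c • (d • n))
      rw [mul_smul]
    rw [h1]; rfl
  smul_zero c := map_zero (rsmul (A := A) (M := M) (N := N) c)
  smul_add c x y := map_add (rsmul (A := A) (M := M) (N := N) c) x y
  add_smul c d x := by
    refine QuotientAddGroup.induction_on x (fun z => ?_)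
    show QuotientAddGroup.mk (rAux M (c + d) z)
      = QuotientAddGroup.mk (rAux M c z) + QuotientAddGroup.mk (rAux M d z)
    have h1 : rAux (N := N) M (c + d) = rAux M c + rAux M d := by
      apply TensorProduct.ext'
      intro m n
      show m ⊗ₜ[ℤ] ((c + d) • n) = m ⊗ₜ[ℤ] (c • n) + m ⊗ₜ[ℤ] (d • n)
      rw [add_smul, tmul_add]
    rw [h1]; rfl
  zero_smul x := by
    refine QuotientAddGroup.induction_on x (fun z => ?_)
    show QuotientAddGroup.mk (rAux M (0 : C) z) = 0
    have h1 : rAux (N := N) M (0 : C) = 0 := by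
      apply TensorProduct.ext'
      intro m n
      show m ⊗ₜ[ℤ] ((0 : C) • n) = 0
      rw [zero_smul, tmul_zero]
    rw [h1]; rfl

lemma smul_mk_right (c : C) (m : M) (n : N) :
    c • mk A m n = mk A m (c • n) := rsmul_mk c m n

end RightModule

section Map

variable {N' : Type*} [AddCommGroup N'] [Module A N']

/-- Functoriality of the balanced tensor product in the right variable. -/
def mapRight (f : N →ₗ[A] N') : NCT A M N →+ NCT A M N' :=
  QuotientAddGroup.map _ _
    (TensorProduct.map LinearMap.id f.toAddMonoidHom.toIntLinearMap).toAddMonoidHom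
    (by
      refine (AddSubgroup.closure_le _).2 ?_
      rintro z ⟨a, m, n, rfl⟩
      refine AddSubgroup.mem_comap.2 ?_
      have h : TensorProduct.map LinearMap.id f.toAddMonoidHom.toIntLinearMap
          ((op a • m) ⊗ₜ[ℤ] n - m ⊗ₜ[ℤ] (a • n))
          = (op a • m) ⊗ₜ[ℤ] (f n) - m ⊗ₜ[ℤ] (a • f n) := by
        rw [map_sub]
        congr 1
        show m ⊗ₜ[ℤ] (f (a • n)) = m ⊗ₜ[ℤ] (a • f n)
        rw [map_smul]
      rw [LinearMap.toAddMonoidHom_coe, h]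
      exact AddSubgroup.subset_closure ⟨a, m, f n, rfl⟩)

lemma mapRight_mk (f : N →ₗ[A] N') (m : M) (n : N) :
    mapRight (M := M) f (mk A m n) = mk A m (f n) := by
  show QuotientAddGroup.mk _ = _
  rfl

variable {C : Type*} [Ring C] [Module C M] [SMulCommClass C Aᵐᵒᵖ M]

/-- Bundled `C`-linear version of `mapRight`, for the module structure via the left factor. -/
def lmapRight (f : N →ₗ[A] N') : NCT A M N →ₗ[C] NCT A M N' where
  toFun := mapRight f
  map_add' := map_add _
  map_smul' c x := by
    refine QuotientAddGroup.induction_on x (fun z => ?_)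
    show (QuotientAddGroup.mk
        (TensorProduct.map LinearMap.id f.toAddMonoidHom.toIntLinearMap (lAux N c z))
        : NCT A M N')
      = (QuotientAddGroup.mk
        (lAux N' c (TensorProduct.map LinearMap.id f.toAddMonoidHom.toIntLinearMap z))
        : NCT A M N')
    congr 1
    have h : (TensorProduct.map (LinearMap.id : M →ₗ[ℤ] M)
          f.toAddMonoidHom.toIntLinearMap).comp (lAux (M := M) N c)
        = (lAux (M := M) N' c).comp
            (TensorProduct.map (LinearMap.id : M →ₗ[ℤ] M) f.toAddMonoidHom.toIntLinearMap) := by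
      apply TensorProduct.ext'
      intro m n
      rfl
    exact LinearMap.congr_fun h z

lemma lmapRight_mk (f : N →ₗ[A] N') (m : M) (n : N) :
    (lmapRight f : NCT A M N →ₗ[C] NCT A M N') (mk A m n) = mk A m (f n) := rfl

end Map

section MapLeft

variable {M' : Type*} [AddCommGroup M'] [Module Aᵐᵒᵖ M']

/-- Functoriality of the balanced tensor product in the left variable, for a right
`A`-linear map. -/
def mapLeft (g : M →+ M') (hg : ∀ (a : Aᵐᵒᵖ) (m : M), g (a • m) = a • g m) :
    NCT A M N →+ NCT A M' N :=
  QuotientAddGroup.map _ _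
    (TensorProduct.map g.toIntLinearMap LinearMap.id).toAddMonoidHom
    (by
      refine (AddSubgroup.closure_le _).2 ?_
      rintro z ⟨a, m, n, rfl⟩
      refine AddSubgroup.mem_comap.2 ?_
      have h : TensorProduct.map g.toIntLinearMap LinearMap.id
          ((op a • m) ⊗ₜ[ℤ] n - m ⊗ₜ[ℤ] (a • n))
          = (op a • g m) ⊗ₜ[ℤ] n - (g m) ⊗ₜ[ℤ] (a • n) := by
        rw [map_sub]
        congr 1
        show (g (op a • m)) ⊗ₜ[ℤ] n = _
        rw [hg]
      rw [LinearMap.toAddMonoidHom_coe, h]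
      exact AddSubgroup.subset_closure ⟨a, g m, n, rfl⟩)

lemma mapLeft_mk (g : M →+ M') (hg : ∀ (a : Aᵐᵒᵖ) (m : M), g (a • m) = a • g m)
    (m : M) (n : N) : mapLeft (N := N) g hg (mk A m n) = mk A (g m) n := by
  show QuotientAddGroup.mk _ = _
  rfl

end MapLeft

end NCT

end NCTensorLib
/-! ### Library: `G`-graded `R`-modules over a `G`-graded algebra `R`,
and the category `R`-Gr of graded modules with degree-preserving `R`-linear maps. -/

universe v

section GrModLib

variable {k R G : Type*} [CommRing k] [Ring R] [Algebra k R] [AddGroup G] [DecidableEq G]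
variable (ℛ : G → Submodule k R) [SetLike.GradedMonoid ℛ]

/-- A `G`-graded `R`-module: an `R`-module together with a grading by additive
subgroups, compatible with the grading of `R`, which decomposes it as a direct sum. -/
structure GrMod where
  carrier : Type v
  [acg : AddCommGroup carrier]
  [mod : Module R carrier]
  grading : G → AddSubgroup carrier
  smul_mem' : ∀ {g h : G} {r : R} {m : carrier},
    r ∈ ℛ g → m ∈ grading h → r • m ∈ grading (g + h)
  internal' : DirectSum.IsInternal grading

attribute [instance] GrMod.acg GrMod.mod

namespace GrMod

instance : CoeSort (GrMod.{v} ℛ) (Type v) := ⟨carrier⟩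

variable {ℛ}

/-- The identity component `ℛ 0` acts on every component of a graded module. -/
instance instSMulComp (M : GrMod.{v} ℛ) (h : G) :
    SMul ↥(ℛ 0) ↥(M.grading h) :=
  ⟨fun a x => ⟨(a : R) • (x : M.carrier), by
    have := M.smul_mem' a.2 x.2; rwa [zero_add] at this⟩⟩

@[simp] lemma coe_smul_comp (M : GrMod.{v} ℛ) (h : G) (a : ↥(ℛ 0)) (x : ↥(M.grading h)) :
    ((a • x : ↥(M.grading h)) : M.carrier) = (a : R) • (x : M.carrier) := rfl

/-- Every component of a graded module is a module over the identity component. -/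
instance instModuleComp (M : GrMod.{v} ℛ) (h : G) :
    Module ↥(ℛ 0) ↥(M.grading h) where
  one_smul x := Subtype.ext (one_smul R (x : M.carrier))
  mul_smul a b x := Subtype.ext (mul_smul (a : R) (b : R) (x : M.carrier))
  smul_zero a := Subtype.ext (smul_zero (a : R))
  smul_add a x y := Subtype.ext (smul_add (a : R) (x : M.carrier) (y : M.carrier))
  add_smul a b x := Subtype.ext (add_smul (a : R) (b : R) (x : M.carrier))
  zero_smul x := Subtype.ext (zero_smul R (x : M.carrier))

variable (ℛ)

/-- Morphisms of graded modules: `R`-linear maps preserving the grading. -/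
@[ext] structure Hom (M N : GrMod.{v} ℛ) where
  toLin : M.carrier →ₗ[R] N.carrier
  grades : ∀ (g : G) (x : M.carrier), x ∈ M.grading g → toLin x ∈ N.grading g

/-- The category `R`-Gr of `G`-graded `R`-modules. -/
instance : CategoryTheory.Category (GrMod.{v} ℛ) where
  Hom M N := Hom ℛ M N
  id M := ⟨LinearMap.id, fun _ _ h => h⟩
  comp f g := ⟨g.toLin ∘ₗ f.toLin, fun gg x h => g.grades _ _ (f.grades _ _ h)⟩
  id_comp f := rfl
  comp_id f := rfl
  assoc f g h := rfl

end GrMod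

end GrModLib
/-! ### Library: the induced graded module `R ⊗_A X` and its components. -/

section TCompLib

universe u1 u3

variable {k : Type*} {R : Type u1} {G : Type*}
  [CommRing k] [Ring R] [Algebra k R] [AddGroup G]
variable (ℛ : G → Submodule k R) [SetLike.GradedMonoid ℛ]

/-- The `g`-component of the induced graded module `R ⊗_A X`: the additive subgroup
generated by the classes of tensors `r ⊗ x` with `r ∈ ℛ g`. -/
noncomputable def tcomp (X : Type u3) [AddCommGroup X] [Module ↥(ℛ 0) X] (g : G) :
    AddSubgroup (NCT ↥(ℛ 0) R X) :=
  AddSubgroup.closure {z | ∃ r : R, r ∈ ℛ g ∧ ∃ x : X, z = NCT.mk ↥(ℛ 0) r x}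

end TCompLib

/-!
STATEMENT 3: If `R` is a strongly `G`-graded `k`-algebra with `A = R₁` (written
`ℛ 0`), then the induction functor `R ⊗_A − : A-Mod → R-Gr` is an equivalence of
categories, with quasi-inverse the functor sending a graded module `M` to its
identity component `M₁`.
-/

section Statement3

open CategoryTheory

variable {k : Type} {R : Type} {G : Type}
  [CommRing k] [Ring R] [Algebra k R] [AddGroup G] [DecidableEq G]
variable (ℛ : G → Submodule k R) [SetLike.GradedMonoid ℛ]

/-- The identity-component functor `R-Gr → A-Mod`, `M ↦ M₁`. -/
def componentFunctor : GrMod.{0} ℛ ⥤ ModuleCat.{0} ↥(ℛ 0) where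
  obj M := ModuleCat.of ↥(ℛ 0) ↥(M.grading 0)
  map {M N} f := ModuleCat.ofHom
    { toFun := fun x => ⟨f.toLin x.1, f.grades 0 x.1 x.2⟩
      map_add' := fun x y => Subtype.ext (map_add f.toLin x.1 y.1)
      map_smul' := fun a x => Subtype.ext (map_smul f.toLin (a : R) x.1) }
  map_id M := rfl
  map_comp f g := rfl

/-! ### Proof development -/

namespace StrGrProof

open TensorProduct MulOpposite DirectSum

section NCTGeneral

variable {A : Type*} [Ring A] {M N : Type*} [AddCommGroup M] [AddCommGroup N]
  [Module Aᵐᵒᵖ M] [Module A N]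

lemma mk_zero_left (n : N) : NCT.mk A (0 : M) n = 0 := by
  show QuotientAddGroup.mk _ = _
  rw [TensorProduct.zero_tmul]
  rfl

lemma mk_zero_right (m : M) : NCT.mk A m (0 : N) = 0 := by
  show QuotientAddGroup.mk _ = _
  rw [TensorProduct.tmul_zero]
  rfl

lemma mk_neg_right (m : M) (n : N) : NCT.mk A m (-n) = - NCT.mk A m n := by
  apply eq_neg_of_add_eq_zero_left
  rw [← NCT.mk_add_right, neg_add_cancel, mk_zero_right]

lemma addHom_ext {P : Type*} [AddCommGroup P] {f g : NCT A M N →+ P}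
    (h : ∀ m n, f (NCT.mk A m n) = g (NCT.mk A m n)) : f = g := by
  ext z
  refine QuotientAddGroup.induction_on z (fun t => ?_)
  induction t using TensorProduct.induction_on with
  | zero =>
    show f 0 = g 0
    rw [map_zero, map_zero]
  | tmul m n => exact h m n
  | add x y hx hy =>
    show f (QuotientAddGroup.mk x + QuotientAddGroup.mk y)
        = g (QuotientAddGroup.mk x + QuotientAddGroup.mk y)
    exact (map_add f _ _).trans ((congrArg₂ (· + ·) hx hy).trans (map_add g _ _).symm)

lemma zsmul_compat {M₀ X P : Type*} [AddCommGroup M₀] [AddCommGroup X] [AddCommGroup P]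
    (f : M₀ →+ X →+ P) : ∀ (z : ℤ) (r : M₀) (x : X), f (z • r) x = f r (z • x) := by
  intro z r x
  rw [map_zsmul f z r, map_zsmul (f r) z x]
  rfl

lemma mapRangeHom_apply {ι : Type*} [DecidableEq ι] {β₁ β₂ : ι → Type*}
    [∀ i, AddZeroClass (β₁ i)] [∀ i, AddZeroClass (β₂ i)]
    (f : ∀ i, β₁ i →+ β₂ i) (x : Π₀ i, β₁ i) (i : ι) :
    DFinsupp.mapRange.addMonoidHom f x i = f i (x i) := by
  simp [DFinsupp.mapRange.addMonoidHom]

lemma mapRangeHom_of {ι : Type*} [DecidableEq ι] {β₁ β₂ : ι → Type*}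
    [∀ i, AddCommMonoid (β₁ i)] [∀ i, AddCommMonoid (β₂ i)]
    (f : ∀ i, β₁ i →+ β₂ i) (i : ι) (b : β₁ i) :
    DFinsupp.mapRange.addMonoidHom f (DirectSum.of β₁ i b) = DirectSum.of β₂ i (f i b) :=
  DFinsupp.mapRange_single (f := fun i x => f i x) (hf := fun i => (f i).map_zero)

lemma list_hom_sum_apply {M P : Type*} [AddCommMonoid M] [AddCommMonoid P]
    (l : List (M →+ P)) (x : M) :
    l.sum x = (l.map fun f => f x).sum := by
  induction l with
  | nil => rfl
  | cons f l ih => rw [List.sum_cons, AddMonoidHom.add_apply, ih, List.map_cons, List.sum_cons]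

end NCTGeneral

section Main

variable {k R G : Type} [CommRing k] [Ring R] [Algebra k R] [AddGroup G] [DecidableEq G]
variable (ℛ : G → Submodule k R) [SetLike.GradedMonoid ℛ]

section BasicLemmas

variable {X : Type} [AddCommGroup X] [Module ↥(ℛ 0) X]

lemma smul_mk' (r s : R) (x : X) :
    r • NCT.mk ↥(ℛ 0) s x = NCT.mk ↥(ℛ 0) (r * s) x := NCT.smul_mk r s x

lemma mk_balanced' (r : R) (a : ↥(ℛ 0)) (x : X) :
    NCT.mk ↥(ℛ 0) (r * (a : R)) x = NCT.mk ↥(ℛ 0) r (a • x) := NCT.mk_balanced a r x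

lemma linMap_ext {P : Type} [AddCommGroup P] [Module R P]
    {f g : NCT ↥(ℛ 0) R X →ₗ[R] P}
    (h : ∀ (r : R) (x : X), f (NCT.mk ↥(ℛ 0) r x) = g (NCT.mk ↥(ℛ 0) r x)) : f = g :=
  LinearMap.ext fun z => DFunLike.congr_fun
    (addHom_ext (f := f.toAddMonoidHom) (g := g.toAddMonoidHom) h) z

lemma mk_list_sum (x : X) (l' : List R) :
    (l'.map fun s => NCT.mk ↥(ℛ 0) s x).sum = NCT.mk ↥(ℛ 0) l'.sum x := by
  induction l' with
  | nil => rw [List.map_nil, List.sum_nil, List.sum_nil, mk_zero_left]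
  | cons s l ih => rw [List.map_cons, List.sum_cons, List.sum_cons, ih, NCT.mk_add_left]

end BasicLemmas

section Decomp

variable [DirectSum.Decomposition ℛ]
variable (X : Type) [AddCommGroup X] [Module ↥(ℛ 0) X]

/-- Homogeneous generator of `tcomp`. -/
noncomputable def mkc (g : G) (r : ↥(ℛ g)) (x : X) : ↥(tcomp ℛ X g) :=
  ⟨NCT.mk ↥(ℛ 0) (r : R) x, AddSubgroup.subset_closure ⟨(r : R), r.2, x, rfl⟩⟩

/-- `mkc` bundled as an additive map in the first variable. -/
noncomputable def mkcHom (x : X) (g : G) : ↥(ℛ g) →+ ↥(tcomp ℛ X g) where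
  toFun r := mkc ℛ X g r x
  map_zero' := Subtype.ext (mk_zero_left x)
  map_add' r s := Subtype.ext (NCT.mk_add_left _ _ _)

/-- The underlying function of the bilinear decomposition map. -/
noncomputable def bilFun (r : R) (x : X) : ⨁ g, ↥(tcomp ℛ X g) :=
  DFinsupp.mapRange.addMonoidHom (mkcHom ℛ X x) (DirectSum.decompose ℛ r)

lemma bilFun_apply (r : R) (x : X) (g : G) :
    bilFun ℛ X r x g = mkc ℛ X g (DirectSum.decompose ℛ r g) x := by
  unfold bilFun
  rw [mapRangeHom_apply]
  rfl

/-- The bilinear decomposition map. -/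
noncomputable def bil : R →+ X →+ ⨁ g, ↥(tcomp ℛ X g) where
  toFun r :=
    { toFun := bilFun ℛ X r
      map_zero' := by
        refine DFinsupp.ext fun g => ?_
        rw [bilFun_apply, DFinsupp.zero_apply]
        exact Subtype.ext (mk_zero_right _)
      map_add' := fun x y => by
        refine DFinsupp.ext fun g => ?_
        rw [DFinsupp.add_apply, bilFun_apply, bilFun_apply, bilFun_apply]
        exact Subtype.ext (NCT.mk_add_right _ _ _) }
  map_zero' := by
    refine AddMonoidHom.ext fun x => ?_
    refine DFinsupp.ext fun g => ?_
    simp only [AddMonoidHom.zero_apply, AddMonoidHom.coe_mk, ZeroHom.coe_mk,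
      DFinsupp.zero_apply]
    rw [bilFun_apply, DirectSum.decompose_zero, DFinsupp.zero_apply]
    exact Subtype.ext (mk_zero_left x)
  map_add' r s := by
    refine AddMonoidHom.ext fun x => ?_
    refine DFinsupp.ext fun g => ?_
    simp only [AddMonoidHom.add_apply, AddMonoidHom.coe_mk, ZeroHom.coe_mk]
    rw [DFinsupp.add_apply, bilFun_apply, bilFun_apply, bilFun_apply,
      DirectSum.decompose_add, DFinsupp.add_apply]
    exact Subtype.ext (NCT.mk_add_left _ _ _)

lemma bil_of {g : G} (r : ↥(ℛ g)) (x : X) :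
    bil ℛ X (r : R) x = DirectSum.of (fun g => ↥(tcomp ℛ X g)) g (mkc ℛ X g r x) := by
  show DFinsupp.mapRange.addMonoidHom (mkcHom ℛ X x) (DirectSum.decompose ℛ (r : R)) = _
  rw [DirectSum.decompose_coe]
  exact mapRangeHom_of (mkcHom ℛ X x) g r

lemma bil_balanced (a : ↥(ℛ 0)) (r : R) (x : X) :
    bil ℛ X (r * (a : R)) x = bil ℛ X r (a • x) := by
  refine DirectSum.Decomposition.inductionOn ℛ
    (motive := fun r => bil ℛ X (r * (a : R)) x = bil ℛ X r (a • x)) ?_ ?_ ?_ r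
  · beta_reduce
    rw [zero_mul, map_zero]
    rfl
  · intro g m
    have h1 : (m : R) * (a : R) ∈ ℛ g := by
      have := GrComp.mul_mem_shift m.2 a.2
      rwa [add_zero] at this
    have e1 : bil ℛ X ((m : R) * (a : R)) x
        = DirectSum.of (fun g => ↥(tcomp ℛ X g)) g (mkc ℛ X g ⟨(m : R) * (a : R), h1⟩ x) :=
      bil_of ℛ X ⟨(m : R) * (a : R), h1⟩ x
    rw [e1, bil_of ℛ X m (a • x)]
    exact congrArg _ (Subtype.ext (mk_balanced' ℛ (m : R) a x))
  · intro r s hr hs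
    rw [add_mul, map_add, map_add, AddMonoidHom.add_apply, AddMonoidHom.add_apply, hr, hs]

/-- Decomposition map on the plain tensor product. -/
noncomputable def ΦAux : (R ⊗[ℤ] X) →+ ⨁ g, ↥(tcomp ℛ X g) :=
  TensorProduct.liftAddHom (bil ℛ X) (zsmul_compat _)

lemma ΦAux_tmul (r : R) (x : X) : ΦAux ℛ X (r ⊗ₜ[ℤ] x) = bil ℛ X r x :=
  TensorProduct.liftAddHom_tmul _ _ r x

/-- The decomposition map on the balanced tensor product. -/
noncomputable def Φ : NCT ↥(ℛ 0) R X →+ ⨁ g, ↥(tcomp ℛ X g) :=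
  QuotientAddGroup.lift _ (ΦAux ℛ X) (by
    refine (AddSubgroup.closure_le _).2 ?_
    rintro z ⟨a, r, x, rfl⟩
    have h1 : ΦAux ℛ X ((op a • r) ⊗ₜ[ℤ] x) = ΦAux ℛ X (r ⊗ₜ[ℤ] (a • x)) := by
      rw [ΦAux_tmul, ΦAux_tmul]
      exact bil_balanced ℛ X a r x
    simp only [SetLike.mem_coe, AddMonoidHom.mem_ker, map_sub, h1, sub_self])

lemma Φ_mk (r : R) (x : X) :
    Φ ℛ X (NCT.mk ↥(ℛ 0) r x) = bil ℛ X r x :=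
  ΦAux_tmul ℛ X r x

lemma Φ_mk_of {g : G} (r : ↥(ℛ g)) (x : X) :
    Φ ℛ X (NCT.mk ↥(ℛ 0) (r : R) x)
      = DirectSum.of (fun g => ↥(tcomp ℛ X g)) g (mkc ℛ X g r x) := by
  rw [Φ_mk, bil_of]

lemma coe_Φ (z : NCT ↥(ℛ 0) R X) :
    DirectSum.coeAddMonoidHom (tcomp ℛ X) (Φ ℛ X z) = z := by
  have h : (DirectSum.coeAddMonoidHom (tcomp ℛ X)).comp (Φ ℛ X) = AddMonoidHom.id _ := by
    apply addHom_ext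
    intro r x
    simp only [AddMonoidHom.comp_apply, AddMonoidHom.id_apply]
    refine DirectSum.Decomposition.inductionOn ℛ
      (motive := fun r => DirectSum.coeAddMonoidHom (tcomp ℛ X)
        (Φ ℛ X (NCT.mk ↥(ℛ 0) r x)) = NCT.mk ↥(ℛ 0) r x) ?_ ?_ ?_ r
    · beta_reduce
      rw [mk_zero_left, map_zero, map_zero]
    · intro g m
      rw [Φ_mk_of, DirectSum.coeAddMonoidHom_of]
      rfl
    · intro r s hr hs
      rw [NCT.mk_add_left, map_add, map_add, hr, hs]
  exact DFunLike.congr_fun h z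

lemma Φ_coe {g : G} (w : NCT ↥(ℛ 0) R X) (hw : w ∈ tcomp ℛ X g) :
    Φ ℛ X w = DirectSum.of (fun g => ↥(tcomp ℛ X g)) g ⟨w, hw⟩ := by
  refine AddSubgroup.closure_induction
    (p := fun w hw => Φ ℛ X w
      = DirectSum.of (fun g => ↥(tcomp ℛ X g)) g (⟨w, hw⟩ : ↥(tcomp ℛ X g))) ?_ ?_ ?_ ?_ hw
  · rintro w ⟨r, hr, x, rfl⟩
    exact Φ_mk_of ℛ X ⟨r, hr⟩ x
  · show Φ ℛ X 0 = DirectSum.of (fun g => ↥(tcomp ℛ X g)) g 0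
    rw [map_zero, map_zero]
  · intro x y hx hy px py
    show Φ ℛ X (x + y) = DirectSum.of (fun g => ↥(tcomp ℛ X g)) g (⟨x, hx⟩ + ⟨y, hy⟩)
    rw [map_add, map_add, px, py]
  · intro x hx px
    show Φ ℛ X (-x) = DirectSum.of (fun g => ↥(tcomp ℛ X g)) g (-⟨x, hx⟩)
    rw [map_neg, map_neg, px]

lemma internal_tcomp : DirectSum.IsInternal (tcomp ℛ X) := by
  refine ⟨Function.LeftInverse.injective (g := Φ ℛ X) ?_,
    Function.RightInverse.surjective (g := Φ ℛ X) ?_⟩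
  · intro w
    induction w using DirectSum.induction_on with
    | zero => rw [map_zero, map_zero]
    | of g z =>
      rw [DirectSum.coeAddMonoidHom_of]
      exact Φ_coe ℛ X _ z.2
    | add x y hx hy => rw [map_add, map_add, hx, hy]
  · exact coe_Φ ℛ X

lemma tcomp_smul_mem {g h : G} {r : R} {z : NCT ↥(ℛ 0) R X}
    (hr : r ∈ ℛ g) (hz : z ∈ tcomp ℛ X h) : r • z ∈ tcomp ℛ X (g + h) := by
  refine AddSubgroup.closure_induction (p := fun w _ => r • w ∈ tcomp ℛ X (g + h)) ?_ ?_ ?_ ?_ hz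
  · rintro w ⟨s, hs, x, rfl⟩
    rw [smul_mk']
    exact AddSubgroup.subset_closure ⟨r * s, GrComp.mul_mem_shift hr hs, x, rfl⟩
  · beta_reduce
    rw [smul_zero]
    exact zero_mem _
  · intro w₁ w₂ _ _ h1 h2
    beta_reduce
    rw [smul_add]
    exact add_mem h1 h2
  · intro w _ h1
    beta_reduce
    rw [smul_neg]
    exact neg_mem h1

/-- The induced graded module `R ⊗_A X`. -/
noncomputable def IndObj : GrMod.{0} ℛ where
  carrier := NCT ↥(ℛ 0) R X
  grading := tcomp ℛ X
  smul_mem' := fun hr hm => tcomp_smul_mem ℛ X hr hm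
  internal' := internal_tcomp ℛ X

variable {Y : Type} [AddCommGroup Y] [Module ↥(ℛ 0) Y]

lemma lmapRight_mem_tcomp (f : X →ₗ[↥(ℛ 0)] Y) {g : G} {z : NCT ↥(ℛ 0) R X}
    (hz : z ∈ tcomp ℛ X g) :
    (NCT.lmapRight (C := R) f : NCT ↥(ℛ 0) R X →ₗ[R] NCT ↥(ℛ 0) R Y) z ∈ tcomp ℛ Y g := by
  refine AddSubgroup.closure_induction
    (p := fun w _ => (NCT.lmapRight (C := R) f : NCT ↥(ℛ 0) R X →ₗ[R] NCT ↥(ℛ 0) R Y) w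
      ∈ tcomp ℛ Y g) ?_ ?_ ?_ ?_ hz
  · rintro w ⟨r, hr, x, rfl⟩
    rw [NCT.lmapRight_mk]
    exact AddSubgroup.subset_closure ⟨r, hr, f x, rfl⟩
  · beta_reduce
    rw [map_zero]
    exact zero_mem _
  · intro a b _ _ ha hb
    beta_reduce
    rw [map_add]
    exact add_mem ha hb
  · intro a _ ha
    beta_reduce
    rw [map_neg]
    exact neg_mem ha

end Decomp

section Functor

open CategoryTheory

variable [DirectSum.Decomposition ℛ]

/-- The induction functor. -/
noncomputable def Ind : ModuleCat.{0} ↥(ℛ 0) ⥤ GrMod.{0} ℛ where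
  obj X := IndObj ℛ X
  map {X Y} f :=
    { toLin := NCT.lmapRight (C := R) f.hom
      grades := fun g z hz => lmapRight_mem_tcomp ℛ X f.hom hz }
  map_id X := by
    apply GrMod.Hom.ext
    refine linMap_ext ℛ fun r x => ?_
    exact NCT.lmapRight_mk _ r x
  map_comp {X Y Z} f g := by
    apply GrMod.Hom.ext
    refine linMap_ext ℛ fun r x => ?_
    refine (NCT.lmapRight_mk _ r x).trans ?_
    exact ((congrArg _ (NCT.lmapRight_mk (C := R) f.hom r x)).trans
      (NCT.lmapRight_mk (C := R) g.hom r _)).symm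

end Functor

section Unit

variable [DirectSum.Decomposition ℛ]
variable (X : Type) [AddCommGroup X] [Module ↥(ℛ 0) X]

/-- The unit `X → (R ⊗_A X)₀`. -/
noncomputable def ηlin : X →ₗ[↥(ℛ 0)] ↥((IndObj ℛ X).grading 0) where
  toFun x := ⟨NCT.mk ↥(ℛ 0) (1 : R) x,
    AddSubgroup.subset_closure ⟨1, SetLike.one_mem_graded ℛ, x, rfl⟩⟩
  map_add' x y := Subtype.ext (NCT.mk_add_right _ _ _)
  map_smul' a x := Subtype.ext (by
    show NCT.mk ↥(ℛ 0) (1 : R) (a • x) = (a : R) • NCT.mk ↥(ℛ 0) (1 : R) x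
    rw [smul_mk' ℛ, mul_one, ← mk_balanced' ℛ, one_mul])

/-- The bilinear retraction via the degree-`0` projection. -/
noncomputable def βbil : R →+ X →+ X where
  toFun r :=
    { toFun := fun x => ((DirectSum.decompose ℛ r 0 : ↥(ℛ 0))) • x
      map_zero' := smul_zero _
      map_add' := fun x y => smul_add _ x y }
  map_zero' := by
    refine AddMonoidHom.ext fun x => ?_
    show ((DirectSum.decompose ℛ (0 : R) 0 : ↥(ℛ 0))) • x = 0
    rw [DirectSum.decompose_zero, DFinsupp.zero_apply, zero_smul]
  map_add' r s := by
    refine AddMonoidHom.ext fun x => ?_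
    show ((DirectSum.decompose ℛ (r + s) 0 : ↥(ℛ 0))) • x = _
    rw [DirectSum.decompose_add, DFinsupp.add_apply, add_smul]
    rfl

lemma decompose_mul_a (a : ↥(ℛ 0)) :
    ∀ r : R, (DirectSum.decompose ℛ (r * (a : R)) 0 : ↥(ℛ 0))
      = (DirectSum.decompose ℛ r 0) * a := by
  refine DirectSum.Decomposition.inductionOn ℛ
    (motive := fun r => (DirectSum.decompose ℛ (r * (a : R)) 0 : ↥(ℛ 0))
      = (DirectSum.decompose ℛ r 0) * a) ?_ ?_ ?_
  · beta_reduce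
    rw [zero_mul, DirectSum.decompose_zero, DFinsupp.zero_apply, zero_mul]
  · intro g m
    by_cases hg : g = 0
    · subst hg
      have h2 : (m : R) * (a : R) ∈ ℛ 0 := by
        have := GrComp.mul_mem_shift m.2 a.2
        rwa [add_zero] at this
      have e1 : DirectSum.decompose ℛ ((m : R) * (a : R)) 0 = ⟨(m : R) * (a : R), h2⟩ :=
        Subtype.ext (DirectSum.decompose_of_mem_same ℛ h2)
      have e2 : DirectSum.decompose ℛ (m : R) 0 = m :=
        Subtype.ext (DirectSum.decompose_of_mem_same ℛ m.2)
      rw [e1, e2]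
      rfl
    · have h2 : (m : R) * (a : R) ∈ ℛ g := by
        have := GrComp.mul_mem_shift m.2 a.2
        rwa [add_zero] at this
      have e1 : DirectSum.decompose ℛ ((m : R) * (a : R))
          = DirectSum.of (fun i => ↥(ℛ i)) g ⟨(m : R) * (a : R), h2⟩ :=
        DirectSum.decompose_of_mem ℛ h2
      rw [e1, DirectSum.decompose_coe ℛ m, DirectSum.of_eq_of_ne _ _ _ (Ne.symm hg),
        DirectSum.of_eq_of_ne _ _ _ (Ne.symm hg), zero_mul]
  · intro r s hr hs
    rw [add_mul, DirectSum.decompose_add, DFinsupp.add_apply, hr, hs,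
      DirectSum.decompose_add, DFinsupp.add_apply, add_mul]

/-- The retraction on the balanced tensor product. -/
noncomputable def β : NCT ↥(ℛ 0) R X →+ X :=
  QuotientAddGroup.lift _ (TensorProduct.liftAddHom (βbil ℛ X) (zsmul_compat _)) (by
    refine (AddSubgroup.closure_le _).2 ?_
    rintro z ⟨a, r, x, rfl⟩
    have h1 : TensorProduct.liftAddHom (βbil ℛ X) (zsmul_compat _) ((op a • r) ⊗ₜ[ℤ] x)
        = TensorProduct.liftAddHom (βbil ℛ X) (zsmul_compat _) (r ⊗ₜ[ℤ] (a • x)) := by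
      rw [TensorProduct.liftAddHom_tmul, TensorProduct.liftAddHom_tmul]
      show (DirectSum.decompose ℛ (r * (a : R)) 0 : ↥(ℛ 0)) • x
          = (DirectSum.decompose ℛ r 0 : ↥(ℛ 0)) • (a • x)
      rw [decompose_mul_a, mul_smul]
    simp only [SetLike.mem_coe, AddMonoidHom.mem_ker, map_sub, h1, sub_self])

lemma β_mk (r : R) (x : X) :
    β ℛ X (NCT.mk ↥(ℛ 0) r x) = (DirectSum.decompose ℛ r 0 : ↥(ℛ 0)) • x :=
  TensorProduct.liftAddHom_tmul (βbil ℛ X) (zsmul_compat _) r x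

lemma β_mk_one (x : X) : β ℛ X (NCT.mk ↥(ℛ 0) (1 : R) x) = x := by
  rw [β_mk]
  have h1 : (DirectSum.decompose ℛ (1 : R) 0 : ↥(ℛ 0)) = 1 :=
    Subtype.ext (DirectSum.decompose_of_mem_same ℛ (SetLike.one_mem_graded ℛ))
  rw [h1, one_smul]

lemma ηlin_bijective : Function.Bijective (ηlin ℛ X) := by
  constructor
  · intro x y hxy
    have h1 : NCT.mk ↥(ℛ 0) (1 : R) x = NCT.mk ↥(ℛ 0) (1 : R) y :=
      congrArg Subtype.val hxy
    have h2 := congrArg (β ℛ X) h1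
    rwa [β_mk_one, β_mk_one] at h2
  · rintro ⟨z, hz⟩
    have h : ∀ w (_ : w ∈ tcomp ℛ X 0), ∃ x : X, NCT.mk ↥(ℛ 0) (1 : R) x = w := by
      intro w hw
      refine AddSubgroup.closure_induction
        (p := fun w _ => ∃ x : X, NCT.mk ↥(ℛ 0) (1 : R) x = w) ?_ ?_ ?_ ?_ hw
      · rintro w ⟨r, hr, x, rfl⟩
        refine ⟨(⟨r, hr⟩ : ↥(ℛ 0)) • x, ?_⟩
        rw [← mk_balanced' ℛ, one_mul]
      · exact ⟨0, mk_zero_right _⟩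
      · rintro w₁ w₂ _ _ ⟨x₁, hx₁⟩ ⟨x₂, hx₂⟩
        exact ⟨x₁ + x₂, by rw [NCT.mk_add_right, hx₁, hx₂]⟩
      · rintro w _ ⟨x, hx⟩
        exact ⟨-x, by rw [mk_neg_right, hx]⟩
    obtain ⟨x, hx⟩ := h z hz
    exact ⟨x, Subtype.ext hx⟩

end Unit

section UnitIso

open CategoryTheory

variable [DirectSum.Decomposition ℛ]

/-- The unit as a natural isomorphism. -/
noncomputable def unitIso : 𝟭 (ModuleCat.{0} ↥(ℛ 0)) ≅ Ind ℛ ⋙ componentFunctor ℛ :=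
  NatIso.ofComponents
    (fun X => LinearEquiv.toModuleIso
      (LinearEquiv.ofBijective (ηlin ℛ ↥X) (ηlin_bijective ℛ ↥X)))
    (fun {X Y} f => by
      refine ModuleCat.hom_ext (LinearMap.ext fun x => ?_)
      refine Subtype.ext ?_
      show NCT.mk ↥(ℛ 0) (1 : R) (f.hom x)
          = (NCT.lmapRight (C := R) f.hom) (NCT.mk ↥(ℛ 0) (1 : R) x)
      rw [NCT.lmapRight_mk])

end UnitIso

section Counit

variable [DirectSum.Decomposition ℛ]
variable (M : GrMod.{0} ℛ)

/-- The bilinear evaluation `R × M₀ → M`. -/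
noncomputable def εbil : R →+ ↥(M.grading 0) →+ M.carrier where
  toFun r :=
    { toFun := fun x => r • (x : M.carrier)
      map_zero' := smul_zero r
      map_add' := fun x y => smul_add r (x : M.carrier) (y : M.carrier) }
  map_zero' := AddMonoidHom.ext fun x => zero_smul R (x : M.carrier)
  map_add' r s := AddMonoidHom.ext fun x => add_smul r s (x : M.carrier)

/-- The counit on the balanced tensor product. -/
noncomputable def ε0 : NCT ↥(ℛ 0) R ↥(M.grading 0) →+ M.carrier :=
  QuotientAddGroup.lift _ (TensorProduct.liftAddHom (εbil ℛ M) (zsmul_compat _)) (by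
    refine (AddSubgroup.closure_le _).2 ?_
    rintro z ⟨a, r, x, rfl⟩
    have h1 : TensorProduct.liftAddHom (εbil ℛ M) (zsmul_compat _) ((op a • r) ⊗ₜ[ℤ] x)
        = TensorProduct.liftAddHom (εbil ℛ M) (zsmul_compat _) (r ⊗ₜ[ℤ] (a • x)) := by
      rw [TensorProduct.liftAddHom_tmul, TensorProduct.liftAddHom_tmul]
      show (r * (a : R)) • (x : M.carrier) = r • ((a : R) • (x : M.carrier))
      rw [mul_smul]
    simp only [SetLike.mem_coe, AddMonoidHom.mem_ker, map_sub, h1, sub_self])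

lemma ε0_mk (r : R) (x : ↥(M.grading 0)) :
    ε0 ℛ M (NCT.mk ↥(ℛ 0) r x) = r • (x : M.carrier) :=
  TensorProduct.liftAddHom_tmul (εbil ℛ M) (zsmul_compat _) r x

lemma ε0_smul (r : R) (z : NCT ↥(ℛ 0) R ↥(M.grading 0)) :
    ε0 ℛ M (r • z) = r • ε0 ℛ M z := by
  have h : (ε0 ℛ M).comp (NCT.lsmul (A := ↥(ℛ 0)) (M := R) (N := ↥(M.grading 0)) r)
      = (DistribMulAction.toAddMonoidHom M.carrier r).comp (ε0 ℛ M) := by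
    apply addHom_ext
    intro s x
    simp only [AddMonoidHom.comp_apply, DistribMulAction.toAddMonoidHom_apply]
    rw [NCT.lsmul_mk, ε0_mk, ε0_mk, smul_eq_mul, mul_smul]
  exact DFunLike.congr_fun h z

/-- The counit as an `R`-linear map. -/
noncomputable def εlin : NCT ↥(ℛ 0) R ↥(M.grading 0) →ₗ[R] M.carrier where
  toFun := ε0 ℛ M
  map_add' := map_add _
  map_smul' := ε0_smul ℛ M

lemma ε0_grades {g : G} {z : NCT ↥(ℛ 0) R ↥(M.grading 0)}
    (hz : z ∈ tcomp ℛ ↥(M.grading 0) g) : ε0 ℛ M z ∈ M.grading g := by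
  refine AddSubgroup.closure_induction (p := fun w _ => ε0 ℛ M w ∈ M.grading g) ?_ ?_ ?_ ?_ hz
  · rintro w ⟨r, hr, x, rfl⟩
    rw [ε0_mk]
    have := M.smul_mem' hr x.2
    rwa [add_zero] at this
  · beta_reduce
    rw [map_zero]
    exact zero_mem _
  · intro a b _ _ ha hb
    beta_reduce
    rw [map_add]
    exact add_mem ha hb
  · intro a _ ha
    beta_reduce
    rw [map_neg]
    exact neg_mem ha

lemma exists_one_list (hst : IsStronglyGraded ℛ) (g : G) :
    ∃ l : List (↥(ℛ g) × ↥(ℛ (-g))), (l.map fun p => ((p.1 : R) * (p.2 : R))).sum = 1 := by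
  have h1 : (1 : R) ∈ ℛ g * ℛ (-g) := by
    rw [hst g (-g), add_neg_cancel]
    exact SetLike.one_mem_graded ℛ
  refine Submodule.mul_induction_on h1 ?_ ?_
  · intro m hm n hn
    exact ⟨[(⟨m, hm⟩, ⟨n, hn⟩)], by simp⟩
  · rintro x y ⟨l₁, h₁⟩ ⟨l₂, h₂⟩
    exact ⟨l₁ ++ l₂, by rw [List.map_append, List.sum_append, h₁, h₂]⟩

lemma ε0_exists_list (g : G) (l : List (↥(ℛ g) × ↥(ℛ (-g)))) {m : M.carrier}
    (hm : m ∈ M.grading g) :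
    ∃ z ∈ tcomp ℛ ↥(M.grading 0) g,
      ε0 ℛ M z = ((l.map fun p => ((p.1 : R) * (p.2 : R))).sum) • m := by
  induction l with
  | nil => exact ⟨0, zero_mem _, by rw [map_zero, List.map_nil, List.sum_nil, zero_smul]⟩
  | cons p l ih =>
    obtain ⟨z, hz, hez⟩ := ih
    have h0 : (p.2 : R) • m ∈ M.grading 0 := by
      have := M.smul_mem' p.2.2 hm
      rwa [neg_add_cancel] at this
    refine ⟨NCT.mk ↥(ℛ 0) (p.1 : R) (⟨(p.2 : R) • m, h0⟩ : ↥(M.grading 0)) + z,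
      add_mem (AddSubgroup.subset_closure ⟨(p.1 : R), p.1.2, _, rfl⟩) hz, ?_⟩
    rw [map_add, ε0_mk, hez, List.map_cons, List.sum_cons, add_smul, mul_smul]

lemma smul_neg_mem (g : G) (q : ↥(ℛ (-g))) (m : ↥(M.grading g)) :
    (q : R) • (m : M.carrier) ∈ M.grading 0 := by
  have := M.smul_mem' q.2 m.2
  rwa [neg_add_cancel] at this

/-- One summand of the retraction `M_g → R ⊗_A M₀`. -/
noncomputable def lamP (g : G) (p : ↥(ℛ g) × ↥(ℛ (-g))) :
    ↥(M.grading g) →+ NCT ↥(ℛ 0) R ↥(M.grading 0) where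
  toFun m := NCT.mk ↥(ℛ 0) (p.1 : R)
    (⟨(p.2 : R) • (m : M.carrier), smul_neg_mem ℛ M g p.2 m⟩ : ↥(M.grading 0))
  map_zero' := by
    have h1 : (⟨(p.2 : R) • (((0 : ↥(M.grading g))) : M.carrier),
        smul_neg_mem ℛ M g p.2 0⟩ : ↥(M.grading 0)) = 0 := Subtype.ext (smul_zero _)
    exact (congrArg (NCT.mk ↥(ℛ 0) (p.1 : R)) h1).trans (mk_zero_right _)
  map_add' m n := by
    have h1 : (⟨(p.2 : R) • ((m + n : ↥(M.grading g)) : M.carrier),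
        smul_neg_mem ℛ M g p.2 (m + n)⟩ : ↥(M.grading 0))
        = ⟨(p.2 : R) • (m : M.carrier), smul_neg_mem ℛ M g p.2 m⟩
          + ⟨(p.2 : R) • (n : M.carrier), smul_neg_mem ℛ M g p.2 n⟩ :=
      Subtype.ext (smul_add _ _ _)
    exact (congrArg (NCT.mk ↥(ℛ 0) (p.1 : R)) h1).trans (NCT.mk_add_right _ _ _)

/-- The retraction `M_g → R ⊗_A M₀`. -/
noncomputable def lam (g : G) (l : List (↥(ℛ g) × ↥(ℛ (-g)))) :
    ↥(M.grading g) →+ NCT ↥(ℛ 0) R ↥(M.grading 0) :=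
  (l.map fun p => lamP ℛ M g p).sum

lemma lam_apply_of_coe (g : G) (l : List (↥(ℛ g) × ↥(ℛ (-g))))
    (hl : (l.map fun p => ((p.1 : R) * (p.2 : R))).sum = 1)
    (r : R) (hr : r ∈ ℛ g) (x : ↥(M.grading 0)) (m : ↥(M.grading g))
    (hm : (m : M.carrier) = r • (x : M.carrier)) :
    lam ℛ M g l m = NCT.mk ↥(ℛ 0) r x := by
  have e1 : lam ℛ M g l m = (l.map fun p => lamP ℛ M g p m).sum := by
    show ((l.map fun p => lamP ℛ M g p).sum) m = _
    rw [list_hom_sum_apply, List.map_map]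
    rfl
  have e2 : ∀ p ∈ l, lamP ℛ M g p m = NCT.mk ↥(ℛ 0) ((p.1 : R) * ((p.2 : R) * r)) x := by
    intro p _
    have hpr : (p.2 : R) * r ∈ ℛ 0 := by
      have := GrComp.mul_mem_shift p.2.2 hr
      rwa [neg_add_cancel] at this
    have e3 : (⟨(p.2 : R) • (m : M.carrier), smul_neg_mem ℛ M g p.2 m⟩ : ↥(M.grading 0))
        = (⟨(p.2 : R) * r, hpr⟩ : ↥(ℛ 0)) • x := by
      refine Subtype.ext ?_
      show (p.2 : R) • (m : M.carrier) = ((p.2 : R) * r) • (x : M.carrier)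
      rw [hm, mul_smul]
    show NCT.mk ↥(ℛ 0) (p.1 : R)
        (⟨(p.2 : R) • (m : M.carrier), smul_neg_mem ℛ M g p.2 m⟩ : ↥(M.grading 0)) = _
    rw [e3, ← mk_balanced' ℛ]
  have e4 : (l.map fun p => lamP ℛ M g p m)
      = l.map fun p => NCT.mk ↥(ℛ 0) ((p.1 : R) * ((p.2 : R) * r)) x :=
    List.map_congr_left e2
  have e5 : (l.map fun p => NCT.mk ↥(ℛ 0) ((p.1 : R) * ((p.2 : R) * r)) x)
      = (l.map fun p => (p.1 : R) * ((p.2 : R) * r)).map fun s => NCT.mk ↥(ℛ 0) s x := by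
    rw [List.map_map]
    rfl
  have e6 : (l.map fun p => (p.1 : R) * ((p.2 : R) * r))
      = l.map fun p => ((p.1 : R) * (p.2 : R)) * r := by
    simp only [mul_assoc]
  rw [e1, e4, e5, mk_list_sum, e6, List.sum_map_mul_right, hl, one_mul]

lemma lam_ε0 (g : G) (l : List (↥(ℛ g) × ↥(ℛ (-g))))
    (hl : (l.map fun p => ((p.1 : R) * (p.2 : R))).sum = 1)
    (z : NCT ↥(ℛ 0) R ↥(M.grading 0)) (hz : z ∈ tcomp ℛ ↥(M.grading 0) g) :
    lam ℛ M g l ⟨ε0 ℛ M z, ε0_grades ℛ M hz⟩ = z := by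
  refine AddSubgroup.closure_induction
    (p := fun w hw => lam ℛ M g l ⟨ε0 ℛ M w, ε0_grades ℛ M hw⟩ = w) ?_ ?_ ?_ ?_ hz
  · rintro w ⟨r, hr, x, rfl⟩
    refine lam_apply_of_coe ℛ M g l hl r hr x _ ?_
    exact ε0_mk ℛ M r x
  · calc lam ℛ M g l ⟨ε0 ℛ M 0, ε0_grades ℛ M (zero_mem _)⟩
        = lam ℛ M g l 0 := congrArg _ (Subtype.ext (map_zero (ε0 ℛ M)))
      _ = 0 := map_zero _
  · intro x y hx hy px py
    calc lam ℛ M g l ⟨ε0 ℛ M (x + y), ε0_grades ℛ M (add_mem hx hy)⟩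
        = lam ℛ M g l (⟨ε0 ℛ M x, ε0_grades ℛ M hx⟩ + ⟨ε0 ℛ M y, ε0_grades ℛ M hy⟩) :=
          congrArg _ (Subtype.ext (map_add (ε0 ℛ M) x y))
      _ = x + y := by rw [map_add, px, py]
  · intro x hx px
    calc lam ℛ M g l ⟨ε0 ℛ M (-x), ε0_grades ℛ M (neg_mem hx)⟩
        = lam ℛ M g l (-⟨ε0 ℛ M x, ε0_grades ℛ M hx⟩) :=
          congrArg _ (Subtype.ext (map_neg (ε0 ℛ M) x))
      _ = -x := by rw [map_neg, px]

lemma ε0_eq_zero (g : G) (l : List (↥(ℛ g) × ↥(ℛ (-g))))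
    (hl : (l.map fun p => ((p.1 : R) * (p.2 : R))).sum = 1)
    {z : NCT ↥(ℛ 0) R ↥(M.grading 0)} (hz : z ∈ tcomp ℛ ↥(M.grading 0) g)
    (h0 : ε0 ℛ M z = 0) : z = 0 := by
  have h1 := lam_ε0 ℛ M g l hl z hz
  have h2 : lam ℛ M g l ⟨ε0 ℛ M z, ε0_grades ℛ M hz⟩ = 0 :=
    (congrArg _ (Subtype.ext h0)).trans (map_zero _)
  exact h1.symm.trans h2

/-- Componentwise counit. -/
noncomputable def εcomp (g : G) : ↥(tcomp ℛ ↥(M.grading 0) g) →+ ↥(M.grading g) where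
  toFun t := ⟨ε0 ℛ M t.1, ε0_grades ℛ M t.2⟩
  map_zero' := Subtype.ext (map_zero _)
  map_add' a b := Subtype.ext (map_add (ε0 ℛ M) a.1 b.1)

lemma ε0_injective (hst : IsStronglyGraded ℛ) : Function.Injective (ε0 ℛ M) := by
  rw [injective_iff_map_eq_zero]
  intro z h0
  have hcomm : (DirectSum.coeAddMonoidHom M.grading).comp
        (DFinsupp.mapRange.addMonoidHom (εcomp ℛ M))
      = (ε0 ℛ M).comp (DirectSum.coeAddMonoidHom (tcomp ℛ ↥(M.grading 0))) := by
    apply DirectSum.addHom_ext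
    intro g t
    simp only [AddMonoidHom.comp_apply]
    refine Eq.trans (congrArg (DirectSum.coeAddMonoidHom M.grading)
      (mapRangeHom_of (εcomp ℛ M) g t)) ?_
    rw [DirectSum.coeAddMonoidHom_of, DirectSum.coeAddMonoidHom_of]
    rfl
  have h2 : DirectSum.coeAddMonoidHom M.grading
      (DFinsupp.mapRange.addMonoidHom (εcomp ℛ M) (Φ ℛ ↥(M.grading 0) z)) = 0 := by
    have h3 : DirectSum.coeAddMonoidHom M.grading
          (DFinsupp.mapRange.addMonoidHom (εcomp ℛ M) (Φ ℛ ↥(M.grading 0) z))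
        = ε0 ℛ M (DirectSum.coeAddMonoidHom (tcomp ℛ ↥(M.grading 0))
            (Φ ℛ ↥(M.grading 0) z)) :=
      DFunLike.congr_fun hcomm (Φ ℛ ↥(M.grading 0) z)
    rw [h3, coe_Φ, h0]
  have h3 : DFinsupp.mapRange.addMonoidHom (εcomp ℛ M) (Φ ℛ ↥(M.grading 0) z) = 0 := by
    apply M.internal'.1
    rw [h2, map_zero]
  have h4 : ∀ g : G, ε0 ℛ M ((Φ ℛ ↥(M.grading 0) z) g).1 = 0 := by
    intro g
    have h5 : (DFinsupp.mapRange.addMonoidHom (εcomp ℛ M) (Φ ℛ ↥(M.grading 0) z)) g = 0 := by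
      rw [h3]
      rfl
    rw [mapRangeHom_apply] at h5
    exact congrArg Subtype.val h5
  have h6 : Φ ℛ ↥(M.grading 0) z = 0 := by
    refine DFinsupp.ext fun g => ?_
    rw [DFinsupp.zero_apply]
    obtain ⟨l, hl⟩ := exists_one_list ℛ hst g
    exact Subtype.ext (ε0_eq_zero ℛ M g l hl ((Φ ℛ ↥(M.grading 0) z) g).2 (h4 g))
  have h7 := coe_Φ ℛ ↥(M.grading 0) z
  rw [h6, map_zero] at h7
  exact h7.symm

lemma ε0_surjective (hst : IsStronglyGraded ℛ) : Function.Surjective (ε0 ℛ M) := by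
  intro m
  obtain ⟨w, hw⟩ := M.internal'.2 m
  have h : ∀ w : ⨁ g, ↥(M.grading g),
      ∃ z, ε0 ℛ M z = DirectSum.coeAddMonoidHom M.grading w := by
    intro w
    induction w using DirectSum.induction_on with
    | zero => exact ⟨0, by rw [map_zero, map_zero]⟩
    | of g t =>
      obtain ⟨l, hl⟩ := exists_one_list ℛ hst g
      obtain ⟨z, _, hz⟩ := ε0_exists_list ℛ M g l t.2
      refine ⟨z, ?_⟩
      rw [hz, hl, one_smul, DirectSum.coeAddMonoidHom_of]
    | add w₁ w₂ h₁ h₂ =>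
      obtain ⟨z₁, hz₁⟩ := h₁
      obtain ⟨z₂, hz₂⟩ := h₂
      exact ⟨z₁ + z₂, by rw [map_add, map_add, hz₁, hz₂]⟩
  obtain ⟨z, hz⟩ := h w
  exact ⟨z, hz.trans hw⟩

/-- The counit as an `R`-linear equivalence. -/
noncomputable def εEquiv (hst : IsStronglyGraded ℛ) :
    NCT ↥(ℛ 0) R ↥(M.grading 0) ≃ₗ[R] M.carrier :=
  LinearEquiv.ofBijective (εlin ℛ M) ⟨ε0_injective ℛ M hst, ε0_surjective ℛ M hst⟩

lemma εEquiv_symm_grades (hst : IsStronglyGraded ℛ) {g : G} {y : M.carrier}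
    (hy : y ∈ M.grading g) :
    (εEquiv ℛ M hst).symm y ∈ tcomp ℛ ↥(M.grading 0) g := by
  obtain ⟨l, hl⟩ := exists_one_list ℛ hst g
  obtain ⟨z, hz, hez⟩ := ε0_exists_list ℛ M g l hy
  have h1 : εEquiv ℛ M hst z = y := by
    show ε0 ℛ M z = y
    rw [hez, hl, one_smul]
  rw [← h1, LinearEquiv.symm_apply_apply]
  exact hz

end Counit

section CounitIso

open CategoryTheory

variable [DirectSum.Decomposition ℛ]

/-- The counit as a natural isomorphism. -/
noncomputable def counitIso (hst : IsStronglyGraded ℛ) :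
    componentFunctor ℛ ⋙ Ind ℛ ≅ 𝟭 (GrMod.{0} ℛ) :=
  NatIso.ofComponents
    (fun M =>
      { hom :=
          { toLin := εlin ℛ M
            grades := fun g z hz => ε0_grades ℛ M hz }
        inv :=
          { toLin := (εEquiv ℛ M hst).symm.toLinearMap
            grades := fun g y hy => εEquiv_symm_grades ℛ M hst hy }
        hom_inv_id := by
          apply GrMod.Hom.ext
          refine linMap_ext ℛ fun r x => ?_
          show (εEquiv ℛ M hst).symm (εlin ℛ M (NCT.mk ↥(ℛ 0) r x)) = NCT.mk ↥(ℛ 0) r x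
          exact (εEquiv ℛ M hst).symm_apply_apply _
        inv_hom_id := by
          apply GrMod.Hom.ext
          refine LinearMap.ext fun y => ?_
          show εlin ℛ M ((εEquiv ℛ M hst).symm y) = y
          exact (εEquiv ℛ M hst).apply_symm_apply y })
    (fun {M N} f => by
      apply GrMod.Hom.ext
      refine linMap_ext ℛ (X := ↥(M.grading 0)) fun r x => ?_
      exact ((congrArg (ε0 ℛ N)
          (NCT.lmapRight_mk (C := R) ((componentFunctor ℛ).map f).hom r x)).trans
        (ε0_mk ℛ N r _)).trans
        (((congrArg f.toLin (ε0_mk ℛ M r x)).trans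
          (map_smul f.toLin r (x : M.carrier))).symm))

end CounitIso

end Main

end StrGrProof

theorem induction_functor_is_equivalence
    [DirectSum.Decomposition ℛ] (hstrong : IsStronglyGraded ℛ) :
    ∃ Ind : ModuleCat.{0} ↥(ℛ 0) ⥤ GrMod.{0} ℛ,
      -- `Ind` is the induction functor `X ↦ R ⊗_A X` with the canonical grading ...
      (∀ X : ModuleCat.{0} ↥(ℛ 0),
        ∃ φ : (Ind.obj X).carrier ≃ₗ[R] NCT ↥(ℛ 0) R X,
          ∀ g : G, ((Ind.obj X).grading g).map φ.toLinearMap.toAddMonoidHom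
            = tcomp ℛ X g) ∧
      -- ... and it is an equivalence with quasi-inverse `M ↦ M₁`:
      Nonempty (Ind ⋙ componentFunctor ℛ ≅ 𝟭 (ModuleCat.{0} ↥(ℛ 0))) ∧
      Nonempty (componentFunctor ℛ ⋙ Ind ≅ 𝟭 (GrMod.{0} ℛ)) := by
  refine ⟨StrGrProof.Ind ℛ, fun X => ⟨LinearEquiv.refl R _, fun g => ?_⟩,
    ⟨(StrGrProof.unitIso ℛ).symm⟩, ⟨StrGrProof.counitIso ℛ hstrong⟩⟩
  ext z
  simp only [AddSubgroup.mem_map]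
  constructor
  · rintro ⟨w, hw, rfl⟩
    exact hw
  · intro hz
    exact ⟨z, hz, rfl⟩

end Statement3
end

section
/- Let R be a strongly G-graded algebra over a field k, with G finite and A = R_1 finite dimensional. Then R is self-injective if and only if A is self-injective. -/
/-!
STATEMENT 5: Let `R` be a strongly `G`-graded algebra over a field `k`, with `G` finite
and `A = R₁` finite dimensional.  Then `R` is self-injective iff `A` is self-injective.
(The group `G` is written additively; the identity component is `ℛ 0`.)
-/


section SelfInjAux

open DirectSum

variable {k : Type*} [Field k] {G : Type*} [AddGroup G] [DecidableEq G]
variable {R : Type*} [Ring R] [Algebra k R]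
variable (ℛ : G → Submodule k R) [SetLike.GradedMonoid ℛ] [DirectSum.Decomposition ℛ]

/-- grade-zero component, as an element of `ℛ 0`. -/
noncomputable def grA (r : R) : ↥(ℛ 0) := DirectSum.decompose ℛ r 0

/-- grade-zero component, as an element of `R`. -/
noncomputable def gr0 (r : R) : R := (grA ℛ r : R)

lemma gr0_mem (r : R) : gr0 ℛ r ∈ ℛ 0 := (grA ℛ r).2

lemma grA_add (x y : R) : grA ℛ (x + y) = grA ℛ x + grA ℛ y := by
  simp [grA, DirectSum.decompose_add]

lemma gr0_add (x y : R) : gr0 ℛ (x + y) = gr0 ℛ x + gr0 ℛ y := by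
  simp [gr0, grA_add]

lemma grA_zero : grA ℛ (0 : R) = 0 := by simp [grA]

lemma gr0_zero : gr0 ℛ (0 : R) = 0 := by simp [gr0, grA_zero]

lemma gr0_of_mem_same {x : R} (hx : x ∈ ℛ 0) : gr0 ℛ x = x :=
  DirectSum.decompose_of_mem_same ℛ hx

lemma gr0_of_mem_ne {x : R} {g : G} (hx : x ∈ ℛ g) (hg : g ≠ 0) : gr0 ℛ x = 0 :=
  DirectSum.decompose_of_mem_ne ℛ hx hg

example (a b : ↥(ℛ 0)) : ((a * b : ↥(ℛ 0)) : R) = (a : R) * b := rfl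

lemma gr0_mul_left {a : R} (ha : a ∈ ℛ 0) (x : R) :
    gr0 ℛ (a * x) = a * gr0 ℛ x := by
  induction x using DirectSum.Decomposition.inductionOn ℛ with
  | zero => simp [gr0_zero]
  | homogeneous m =>
    rename_i i
    by_cases hg : i = 0
    · subst hg
      rw [gr0_of_mem_same ℛ m.2, gr0_of_mem_same ℛ (by simpa using GrComp.mul_mem_shift ha m.2)]
    · rw [gr0_of_mem_ne ℛ m.2 hg, mul_zero,
        gr0_of_mem_ne ℛ (by simpa using GrComp.mul_mem_shift ha m.2 : a * (m : R) ∈ ℛ i) hg]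
  | add x y hx hy => rw [mul_add, gr0_add, gr0_add, hx, hy, mul_add]

lemma gr0_mul_right {a : R} (ha : a ∈ ℛ 0) (x : R) :
    gr0 ℛ (x * a) = gr0 ℛ x * a := by
  induction x using DirectSum.Decomposition.inductionOn ℛ with
  | zero => simp [gr0_zero]
  | homogeneous m =>
    rename_i i
    by_cases hg : i = 0
    · subst hg
      rw [gr0_of_mem_same ℛ m.2, gr0_of_mem_same ℛ (by simpa using GrComp.mul_mem_shift m.2 ha)]
    · rw [gr0_of_mem_ne ℛ m.2 hg, zero_mul,
        gr0_of_mem_ne ℛ (by simpa using GrComp.mul_mem_shift m.2 ha : (m : R) * a ∈ ℛ i) hg]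
  | add x y hx hy => rw [add_mul, gr0_add, gr0_add, hx, hy, add_mul]

lemma grA_mul_left (a : ↥(ℛ 0)) (x : R) : grA ℛ ((a : R) * x) = a * grA ℛ x :=
  Subtype.ext (gr0_mul_left ℛ a.2 x)

lemma grA_mul_right (a : ↥(ℛ 0)) (x : R) : grA ℛ (x * (a : R)) = grA ℛ x * a :=
  Subtype.ext (gr0_mul_right ℛ a.2 x)

lemma grA_of_mem {x : R} (hx : x ∈ ℛ 0) : grA ℛ x = ⟨x, hx⟩ :=
  Subtype.ext (gr0_of_mem_same ℛ hx)

lemma exists_dual (hstrong : IsStronglyGraded ℛ) (g : G) :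
    ∃ (m : ℕ) (u v : Fin m → R), (∀ i, u i ∈ ℛ g) ∧ (∀ i, v i ∈ ℛ (-g)) ∧
      ∑ i, u i * v i = 1 := by
  have h1 : (1 : R) ∈ ℛ g * ℛ (-g) := by
    rw [hstrong g (-g), add_neg_cancel]
    exact SetLike.one_mem_graded ℛ
  refine Submodule.mul_induction_on h1 ?_ ?_
  · intro m hm n hn
    exact ⟨1, fun _ => m, fun _ => n, fun _ => hm, fun _ => hn, by simp⟩
  · rintro x y ⟨m₁, u₁, v₁, hu₁, hv₁, h₁⟩ ⟨m₂, u₂, v₂, hu₂, hv₂, h₂⟩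
    refine ⟨m₁ + m₂, Fin.append u₁ u₂, Fin.append v₁ v₂, ?_, ?_, ?_⟩
    · intro i
      refine Fin.addCases (fun j => ?_) (fun j => ?_) i <;>
        simp [Fin.append_left, Fin.append_right, hu₁, hu₂]
    · intro i
      refine Fin.addCases (fun j => ?_) (fun j => ?_) i <;>
        simp [Fin.append_left, Fin.append_right, hv₁, hv₂]
    · rw [Fin.sum_univ_add]
      simp [Fin.append_left, Fin.append_right, h₁, h₂]

end SelfInjAux

section DualIdent

variable {k : Type*} [Field k] {G : Type*} [AddGroup G] [DecidableEq G] [Fintype G]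
variable {R : Type*} [Ring R] [Algebra k R]
variable (ℛ : G → Submodule k R) [SetLike.GradedMonoid ℛ] [DirectSum.Decomposition ℛ]
variable {n : G → ℕ} (u v : ∀ g, Fin (n g) → R)

/-- ∑ q, u q * π₀(v q * x) = x -/
lemma dual_expand_left (hu : ∀ g i, u g i ∈ ℛ g) (hv : ∀ g i, v g i ∈ ℛ (-g))
    (huv : ∀ g, ∑ i, u g i * v g i = 1) (x : R) :
    ∑ q : Σ g : G, Fin (n g), u q.1 q.2 * gr0 ℛ (v q.1 q.2 * x) = x := by
  induction x using DirectSum.Decomposition.inductionOn ℛ with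
  | zero => simp [gr0_zero]
  | homogeneous m =>
    rename_i s
    rw [← Finset.univ_sigma_univ, Finset.sum_sigma]
    rw [Finset.sum_eq_single s]
    · have hmem : ∀ i, v s i * (m : R) ∈ ℛ 0 := fun i => by
        simpa using GrComp.mul_mem_shift (hv s i) m.2
      calc ∑ i, u s i * gr0 ℛ (v s i * (m : R))
          = ∑ i, u s i * (v s i * (m : R)) := by
            refine Finset.sum_congr rfl fun i _ => ?_
            rw [gr0_of_mem_same ℛ (hmem i)]
        _ = (∑ i, u s i * v s i) * (m : R) := by
            rw [Finset.sum_mul]; simp [mul_assoc]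
        _ = (m : R) := by rw [huv s, one_mul]
    · intro g _ hg
      have : ∀ i, gr0 ℛ (v g i * (m : R)) = 0 := fun i => by
        refine gr0_of_mem_ne ℛ (GrComp.mul_mem_shift (hv g i) m.2) ?_
        simpa [neg_add_eq_zero] using hg
      simp [this]
    · intro h; exact absurd (Finset.mem_univ s) h
  | add x y hx hy =>
    simp only [mul_add, gr0_add, Finset.sum_add_distrib, hx, hy]

/-- ∑ q, π₀(x * u q) * v q = x -/
lemma dual_expand_right (hu : ∀ g i, u g i ∈ ℛ g) (hv : ∀ g i, v g i ∈ ℛ (-g))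
    (huv : ∀ g, ∑ i, u g i * v g i = 1) (x : R) :
    ∑ q : Σ g : G, Fin (n g), gr0 ℛ (x * u q.1 q.2) * v q.1 q.2 = x := by
  induction x using DirectSum.Decomposition.inductionOn ℛ with
  | zero => simp [gr0_zero]
  | homogeneous m =>
    rename_i s
    rw [← Finset.univ_sigma_univ, Finset.sum_sigma]
    rw [Finset.sum_eq_single (-s)]
    · have hmem : ∀ i, (m : R) * u (-s) i ∈ ℛ 0 := fun i => by
        simpa using GrComp.mul_mem_shift m.2 (hu (-s) i)
      calc ∑ i, gr0 ℛ ((m : R) * u (-s) i) * v (-s) i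
          = ∑ i, (m : R) * u (-s) i * v (-s) i := by
            refine Finset.sum_congr rfl fun i _ => ?_
            rw [gr0_of_mem_same ℛ (hmem i)]
        _ = (m : R) * ∑ i, u (-s) i * v (-s) i := by
            rw [Finset.mul_sum]; simp [mul_assoc]
        _ = (m : R) := by rw [huv (-s), mul_one]
    · intro g _ hg
      have : ∀ i, gr0 ℛ ((m : R) * u g i) = 0 := fun i => by
        refine gr0_of_mem_ne ℛ (GrComp.mul_mem_shift m.2 (hu g i)) ?_
        intro h
        exact hg (by rwa [add_eq_zero_iff_eq_neg'] at h)
      simp [this]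
    · intro h; exact absurd (Finset.mem_univ (-s)) h
  | add x y hx hy =>
    simp only [add_mul, gr0_add, Finset.sum_add_distrib, hx, hy]

/-- The trace construction gives an `R`-linear map. -/
lemma exists_trace (hu : ∀ g i, u g i ∈ ℛ g) (hv : ∀ g i, v g i ∈ ℛ (-g))
    (huv : ∀ g, ∑ i, u g i * v g i = 1)
    {Y : Type*} [AddCommGroup Y] [Module R Y]
    (φ : Y → R) (hadd : ∀ y z, φ (y + z) = φ y + φ z)
    (hA : ∀ a : R, a ∈ ℛ 0 → ∀ y : Y, φ (a • y) = a * φ y) :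
    ∃ Φ : Y →ₗ[R] R, ∀ y, Φ y = ∑ q : Σ g : G, Fin (n g), u q.1 q.2 * φ (v q.1 q.2 • y) := by
  set φ' : Y →+ R := AddMonoidHom.mk' φ hadd with hφ'
  have key : ∀ (r : R) (y : Y),
      ∑ q : Σ g : G, Fin (n g), u q.1 q.2 * φ (v q.1 q.2 • (r • y))
        = r * ∑ q : Σ g : G, Fin (n g), u q.1 q.2 * φ (v q.1 q.2 • y) := by
    intro r y
    have step : ∀ q : Σ g : G, Fin (n g),
        φ (v q.1 q.2 • (r • y))
          = ∑ q' : Σ g : G, Fin (n g),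
              gr0 ℛ (v q.1 q.2 * r * u q'.1 q'.2) * φ (v q'.1 q'.2 • y) := by
      intro q
      have hx : v q.1 q.2 • (r • y) = (v q.1 q.2 * r) • y := (mul_smul _ _ _).symm
      have hexp : (v q.1 q.2 * r) • y
          = ∑ q' : Σ g : G, Fin (n g),
              gr0 ℛ (v q.1 q.2 * r * u q'.1 q'.2) • (v q'.1 q'.2 • y) := by
        conv_lhs => rw [← dual_expand_right ℛ u v hu hv huv (v q.1 q.2 * r)]
        rw [Finset.sum_smul]
        exact Finset.sum_congr rfl fun q' _ => mul_smul _ _ _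
      rw [hx, hexp]
      rw [show φ = ⇑φ' from rfl, map_sum]
      exact Finset.sum_congr rfl fun q' _ => hA _ (gr0_mem ℛ _) _
    calc ∑ q : Σ g : G, Fin (n g), u q.1 q.2 * φ (v q.1 q.2 • (r • y))
        = ∑ q : Σ g : G, Fin (n g), ∑ q' : Σ g : G, Fin (n g),
            u q.1 q.2 * (gr0 ℛ (v q.1 q.2 * (r * u q'.1 q'.2)) * φ (v q'.1 q'.2 • y)) := by
          refine Finset.sum_congr rfl fun q _ => ?_
          rw [step q, Finset.mul_sum]
          exact Finset.sum_congr rfl fun q' _ => by rw [mul_assoc (v q.1 q.2)]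
      _ = ∑ q' : Σ g : G, Fin (n g), (∑ q : Σ g : G, Fin (n g),
            u q.1 q.2 * gr0 ℛ (v q.1 q.2 * (r * u q'.1 q'.2))) * φ (v q'.1 q'.2 • y) := by
          rw [Finset.sum_comm]
          refine Finset.sum_congr rfl fun q' _ => ?_
          rw [Finset.sum_mul]
          exact Finset.sum_congr rfl fun q _ => (mul_assoc _ _ _).symm
      _ = ∑ q' : Σ g : G, Fin (n g), (r * u q'.1 q'.2) * φ (v q'.1 q'.2 • y) := by
          refine Finset.sum_congr rfl fun q' _ => ?_
          rw [dual_expand_left ℛ u v hu hv huv (r * u q'.1 q'.2)]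
      _ = r * ∑ q : Σ g : G, Fin (n g), u q.1 q.2 * φ (v q.1 q.2 • y) := by
          rw [Finset.mul_sum]
          exact Finset.sum_congr rfl fun q _ => mul_assoc _ _ _
  refine ⟨⟨⟨fun y => ∑ q : Σ g : G, Fin (n g), u q.1 q.2 * φ (v q.1 q.2 • y), ?_⟩, ?_⟩, fun y => rfl⟩
  · intro y z
    simp only [smul_add]
    rw [← Finset.sum_add_distrib]
    exact Finset.sum_congr rfl fun q _ => by rw [hadd, mul_add]
  · intro r y
    exact key r y

end DualIdent

set_option maxHeartbeats 1000000 in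
theorem selfInjective_iff_of_stronglyGraded
    {k : Type*} [Field k] {G : Type*} [AddGroup G] [Finite G] [DecidableEq G]
    {R : Type*} [Ring R] [Algebra k R]
    (ℛ : G → Submodule k R) [SetLike.GradedMonoid ℛ] [DirectSum.Decomposition ℛ]
    (hstrong : IsStronglyGraded ℛ)
    [FiniteDimensional k ↥(ℛ 0)] :
    Module.Injective R R ↔ Module.Injective ↥(ℛ 0) ↥(ℛ 0) := by
  classical
  haveI : Fintype G := Fintype.ofFinite G
  haveI tower : IsScalarTower ↥(ℛ 0) R R := ⟨fun a r m => mul_assoc (a : R) r m⟩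
  choose n u v hu hv huv using exists_dual ℛ hstrong
  constructor
  · -- R self-injective → A self-injective
    intro hR
    refine Module.Baer.injective ?_
    intro I φ
    set S : Set R := (fun a : ↥(ℛ 0) => (a : R)) '' (I : Set ↥(ℛ 0)) with hS
    set J : Submodule R R := Submodule.span R S with hJ
    have hinv : ∀ r ∈ J, ∀ s : R, grA ℛ (s * r) ∈ I := by
      intro r hr
      refine Submodule.span_induction ?_ ?_ ?_ ?_ hr
      · rintro x ⟨a, ha, rfl⟩ s
        rw [grA_mul_right ℛ a s, ← smul_eq_mul]
        exact I.smul_mem (grA ℛ s) ha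
      · intro s
        rw [mul_zero, grA_zero]
        exact I.zero_mem
      · intro x y _ _ hx hy s
        rw [mul_add, grA_add]
        exact I.add_mem (hx s) (hy s)
      · intro r' x _ hx s
        rw [smul_eq_mul, ← mul_assoc]
        exact hx (s * r')
    have hmemJ : ∀ j : ↥J, grA ℛ (j : R) ∈ I := fun j => by
      have := hinv (j : R) j.2 1
      rwa [one_mul] at this
    set φhat : ↥J → R := fun j => ((φ ⟨grA ℛ (j : R), hmemJ j⟩ : ↥(ℛ 0)) : R) with hφhat
    have hadd : ∀ y z : ↥J, φhat (y + z) = φhat y + φhat z := by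
      intro y z
      have e1 : (⟨grA ℛ ((y + z : ↥J) : R), hmemJ (y + z)⟩ : ↥I)
          = ⟨grA ℛ ((y : R)), hmemJ y⟩ + ⟨grA ℛ ((z : R)), hmemJ z⟩ := by
        apply Subtype.ext
        show grA ℛ ((y + z : ↥J) : R) = grA ℛ (y : R) + grA ℛ (z : R)
        rw [show ((y + z : ↥J) : R) = (y : R) + (z : R) from rfl, grA_add]
      calc φhat (y + z)
          = ((φ (⟨grA ℛ ((y : R)), hmemJ y⟩ + ⟨grA ℛ ((z : R)), hmemJ z⟩) : ↥(ℛ 0)) : R) :=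
            congrArg (fun t : ↥I => ((φ t : ↥(ℛ 0)) : R)) e1
        _ = φhat y + φhat z := by rw [map_add]; rfl
    have hAprop : ∀ a : R, a ∈ ℛ 0 → ∀ y : ↥J, φhat (a • y) = a * φhat y := by
      intro a ha y
      have e1 : (⟨grA ℛ ((a • y : ↥J) : R), hmemJ (a • y)⟩ : ↥I)
          = (⟨a, ha⟩ : ↥(ℛ 0)) • ⟨grA ℛ ((y : R)), hmemJ y⟩ := by
        apply Subtype.ext
        show grA ℛ ((a • y : ↥J) : R) = (⟨a, ha⟩ : ↥(ℛ 0)) • grA ℛ (y : R)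
        rw [smul_eq_mul, show ((a • y : ↥J) : R) = a * (y : R) from rfl]
        exact grA_mul_left ℛ ⟨a, ha⟩ (y : R)
      calc φhat (a • y)
          = ((φ ((⟨a, ha⟩ : ↥(ℛ 0)) • ⟨grA ℛ ((y : R)), hmemJ y⟩) : ↥(ℛ 0)) : R) :=
            congrArg (fun t : ↥I => ((φ t : ↥(ℛ 0)) : R)) e1
        _ = a * φhat y := by rw [map_smul]; rfl
    obtain ⟨ψ, hψ⟩ := exists_trace ℛ u v hu hv huv φhat hadd hAprop
    obtain ⟨H, hH⟩ := hR.out J.subtype (Submodule.injective_subtype J) ψ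
    refine ⟨⟨⟨fun a => grA ℛ (H (a : R)), ?_⟩, ?_⟩, ?_⟩
    · intro a b
      show grA ℛ (H ((a : R) + (b : R))) = grA ℛ (H (a : R)) + grA ℛ (H (b : R))
      rw [map_add, grA_add]
    · intro b a
      show grA ℛ (H (((b • a : ↥(ℛ 0))) : R)) = b • grA ℛ (H (a : R))
      have h2 : H ((b : R) * (a : R)) = (b : R) * H (a : R) := by
        have := H.map_smul (b : R) (a : R)
        simpa [smul_eq_mul] using this
      rw [show (((b • a : ↥(ℛ 0))) : R) = (b : R) * (a : R) from rfl, h2,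
        grA_mul_left ℛ b, smul_eq_mul]
    · intro x hx
      have hxJ : (x : R) ∈ J := Submodule.subset_span ⟨x, hx, rfl⟩
      show grA ℛ (H (x : R)) = φ ⟨x, hx⟩
      have h1 : H (x : R) = ψ ⟨(x : R), hxJ⟩ := hH ⟨(x : R), hxJ⟩
      have h2 : ψ ⟨(x : R), hxJ⟩ = ((φ ⟨x, hx⟩ : ↥(ℛ 0)) : R) := by
        rw [hψ]
        have hterm : ∀ q : Σ g : G, Fin (n g),
            φhat (v q.1 q.2 • (⟨(x : R), hxJ⟩ : ↥J))
              = gr0 ℛ (v q.1 q.2 * ((φ ⟨x, hx⟩ : ↥(ℛ 0)) : R)) := by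
          intro q
          have e1 : (⟨grA ℛ ((v q.1 q.2 • (⟨(x : R), hxJ⟩ : ↥J) : ↥J) : R),
                hmemJ (v q.1 q.2 • ⟨(x : R), hxJ⟩)⟩ : ↥I)
              = grA ℛ (v q.1 q.2) • ⟨x, hx⟩ := by
            apply Subtype.ext
            show grA ℛ ((v q.1 q.2 • (⟨(x : R), hxJ⟩ : ↥J) : ↥J) : R)
                = grA ℛ (v q.1 q.2) • x
            rw [smul_eq_mul,
              show ((v q.1 q.2 • (⟨(x : R), hxJ⟩ : ↥J) : ↥J) : R) = v q.1 q.2 * (x : R) from rfl]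
            exact grA_mul_right ℛ x (v q.1 q.2)
          calc φhat (v q.1 q.2 • (⟨(x : R), hxJ⟩ : ↥J))
              = ((φ (grA ℛ (v q.1 q.2) • ⟨x, hx⟩) : ↥(ℛ 0)) : R) :=
                congrArg (fun t : ↥I => ((φ t : ↥(ℛ 0)) : R)) e1
            _ = gr0 ℛ (v q.1 q.2) * ((φ ⟨x, hx⟩ : ↥(ℛ 0)) : R) := by rw [map_smul]; rfl
            _ = gr0 ℛ (v q.1 q.2 * ((φ ⟨x, hx⟩ : ↥(ℛ 0)) : R)) :=
                (gr0_mul_right ℛ (φ ⟨x, hx⟩).2 (v q.1 q.2)).symm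
        calc ∑ q : Σ g : G, Fin (n g), u q.1 q.2 * φhat (v q.1 q.2 • (⟨(x : R), hxJ⟩ : ↥J))
            = ∑ q : Σ g : G, Fin (n g),
                u q.1 q.2 * gr0 ℛ (v q.1 q.2 * ((φ ⟨x, hx⟩ : ↥(ℛ 0)) : R)) :=
              Finset.sum_congr rfl fun q _ => by rw [hterm q]
          _ = ((φ ⟨x, hx⟩ : ↥(ℛ 0)) : R) := dual_expand_left ℛ u v hu hv huv _
      rw [h1, h2]
      exact grA_of_mem ℛ (φ ⟨x, hx⟩).2
  · -- A self-injective → R self-injective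
    intro hA
    refine Module.Baer.injective ?_
    intro J φ
    set J' : Submodule ↥(ℛ 0) R := J.restrictScalars ↥(ℛ 0) with hJ'
    have memJ' : ∀ {r : R}, r ∈ J' → r ∈ J := fun h => h
    set φ0 : ↥J' →ₗ[↥(ℛ 0)] ↥(ℛ 0) :=
      { toFun := fun j => grA ℛ (φ ⟨(j : R), j.2⟩)
        map_add' := by
          intro y z
          have e1 : φ (⟨((y + z : ↥J') : R), (y + z : ↥J').2⟩ : ↥J)
              = φ ⟨(y : R), y.2⟩ + φ ⟨(z : R), z.2⟩ := by
            rw [show (⟨((y + z : ↥J') : R), (y + z : ↥J').2⟩ : ↥J)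
                = ⟨(y : R), y.2⟩ + ⟨(z : R), z.2⟩ from Subtype.ext rfl, map_add]
          exact (congrArg (grA ℛ) e1).trans (grA_add ℛ _ _)
        map_smul' := by
          intro a j
          have e1 : φ (⟨((a • j : ↥J') : R), (a • j : ↥J').2⟩ : ↥J)
              = (a : R) • φ ⟨(j : R), j.2⟩ := by
            rw [show (⟨((a • j : ↥J') : R), (a • j : ↥J').2⟩ : ↥J)
                = (a : R) • ⟨(j : R), j.2⟩ from Subtype.ext rfl, map_smul]
          refine (congrArg (grA ℛ) e1).trans ?_
          show grA ℛ ((a : R) * φ ⟨(j : R), j.2⟩) = _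
          rw [grA_mul_left ℛ a]
          rfl } with hφ0
    obtain ⟨h, hh⟩ := hA.out (X := ↥J') (Y := R) J'.subtype (Submodule.injective_subtype J') φ0
    set φhat : R → R := fun r => ((h r : ↥(ℛ 0)) : R) with hφhat
    have hadd : ∀ y z : R, φhat (y + z) = φhat y + φhat z := by
      intro y z
      show ((h (y + z) : ↥(ℛ 0)) : R) = ((h y : ↥(ℛ 0)) : R) + ((h z : ↥(ℛ 0)) : R)
      rw [map_add]; rfl
    have hAprop : ∀ a : R, a ∈ ℛ 0 → ∀ r : R, φhat (a • r) = a * φhat r := by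
      intro a ha r
      have h1 : h (a • r) = (⟨a, ha⟩ : ↥(ℛ 0)) • h r := by
        rw [show (a • r : R) = (⟨a, ha⟩ : ↥(ℛ 0)) • r from rfl, map_smul]
      show ((h (a • r) : ↥(ℛ 0)) : R) = a * ((h r : ↥(ℛ 0)) : R)
      rw [h1]
      rfl
    obtain ⟨Φ, hΦ⟩ := exists_trace ℛ u v hu hv huv φhat hadd hAprop
    refine ⟨Φ, ?_⟩
    intro x hx
    rw [hΦ]
    have hterm : ∀ q : Σ g : G, Fin (n g),
        φhat (v q.1 q.2 • x) = gr0 ℛ (v q.1 q.2 * φ ⟨x, hx⟩) := by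
      intro q
      have hmem : v q.1 q.2 * x ∈ J' := J.smul_mem (v q.1 q.2) hx
      have h1 : h (v q.1 q.2 • x) = φ0 ⟨v q.1 q.2 * x, hmem⟩ := hh ⟨v q.1 q.2 * x, hmem⟩
      have h2 : φ (⟨v q.1 q.2 * x, memJ' hmem⟩ : ↥J) = v q.1 q.2 • φ ⟨x, hx⟩ := by
        rw [show (⟨v q.1 q.2 * x, memJ' hmem⟩ : ↥J) = v q.1 q.2 • ⟨x, hx⟩ from Subtype.ext rfl,
          map_smul]
      calc φhat (v q.1 q.2 • x)
          = ((φ0 ⟨v q.1 q.2 * x, hmem⟩ : ↥(ℛ 0)) : R) :=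
            congrArg (fun t : ↥(ℛ 0) => (t : R)) h1
        _ = gr0 ℛ (φ (⟨v q.1 q.2 * x, memJ' hmem⟩ : ↥J)) := rfl
        _ = gr0 ℛ (v q.1 q.2 * φ ⟨x, hx⟩) := by rw [h2]; rfl
    calc ∑ q : Σ g : G, Fin (n g), u q.1 q.2 * φhat (v q.1 q.2 • x)
        = ∑ q : Σ g : G, Fin (n g), u q.1 q.2 * gr0 ℛ (v q.1 q.2 * φ ⟨x, hx⟩) :=
          Finset.sum_congr rfl fun q _ => by rw [hterm q]
      _ = φ ⟨x, hx⟩ := dual_expand_left ℛ u v hu hv huv _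
end
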